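/- arXiv:2501.03168 — 4 statements merged into one kernel-verified Lean document; each statement's English description precedes it below -/
import Mathlib

section
/- Let N ≥ 2 be an integer and 0 < β < 1. If (u_n) ⊂ E_N converges weakly in W^{1,N}(0,1) to u (equivalently, u_n → u in L^p(0,1) for every p and hence pointwise a.e. along a subsequence), then I_β(u_n) → I_β(u), i.e. the functional I_β is weakly continuous on E_N for every β < 1. -/
open MeasureTheory Real Set Filter

/-- `u` belongs to `E_N` with weak derivative `g` : `u` is absolutely continuous on `[0,1]`
(it is the integral of its weak derivative `g`), `u 0 = 0`, `|g|^N` is integrable on `(0,1)`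
and `∫₀¹ |g|^N = 1`. -/
def MemEN (N : ℕ) (u g : ℝ → ℝ) : Prop :=
  (∀ s ∈ Set.Icc (0:ℝ) 1, u s = ∫ t in (0:ℝ)..s, g t) ∧
  u 0 = 0 ∧
  IntervalIntegrable g MeasureTheory.volume 0 1 ∧
  MeasureTheory.IntegrableOn (fun t => |g t| ^ N) (Set.Ioc (0:ℝ) 1) ∧
  (∫ t in Set.Ioc (0:ℝ) 1, |g t| ^ N) = 1

/-- The Limiting-Bliss functional `I_β`. -/
noncomputable def Ifun (N : ℕ) (β : ℝ) (v : ℝ → ℝ) : ℝ :=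
  ∫ s in Set.Ioc (0:ℝ) 1,
    Real.exp (β * Real.log (Real.exp 1 / s) * (v s ^ N / s ^ (N - 1)))


lemma holder_small (N : ℕ) (hN : 2 ≤ N) (g : ℝ → ℝ)
    (hgi : IntervalIntegrable g MeasureTheory.volume 0 1)
    (hgN : MeasureTheory.IntegrableOn (fun t => |g t| ^ N) (Set.Ioc (0:ℝ) 1))
    (hg1 : (∫ t in Set.Ioc (0:ℝ) 1, |g t| ^ N) ≤ 1)
    (a b : ℝ) (ha : 0 ≤ a) (hab : a ≤ b) (hb : b ≤ 1) :
    (∫ t in Set.Ioc a b, |g t|) ≤ (b - a) ^ (((N:ℝ) - 1)/N) := by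
  have hN1 : (1:ℝ) < N := by exact_mod_cast lt_of_lt_of_le one_lt_two hN
  have hNpos : (0:ℝ) < N := lt_trans one_pos hN1
  set q : ℝ := (N:ℝ) / ((N:ℝ) - 1) with hq
  have hpq : (N:ℝ).HolderConjugate q := Real.HolderConjugate.conjExponent hN1
  have hsub : Set.Ioc a b ⊆ Set.Ioc (0:ℝ) 1 := Set.Ioc_subset_Ioc ha hb
  -- integrability of |g|^N on Ioc a b
  have hgNab : MeasureTheory.IntegrableOn (fun t => |g t| ^ N) (Set.Ioc a b) :=
    hgN.mono_set hsub
  have hgab : MeasureTheory.IntegrableOn g (Set.Ioc a b) :=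
    (hgi.1.mono_set (by simpa using hsub))
  set μ := MeasureTheory.volume.restrict (Set.Ioc a b) with hμ
  have hfin : IsFiniteMeasure μ := by
    constructor
    rw [hμ, Measure.restrict_apply MeasurableSet.univ, Set.univ_inter]
    exact measure_Ioc_lt_top
  have hmem : MemLp g (ENNReal.ofReal N) μ := by
    rw [← MeasureTheory.memLp_norm_rpow_iff (q := ENNReal.ofReal N) hgab.aestronglyMeasurable
      (by simp; omega) (by simp), ENNReal.div_self (by simp; omega) (by simp),
      MeasureTheory.memLp_one_iff_integrable]
    have : (fun x => ‖g x‖ ^ (ENNReal.ofReal (N:ℝ)).toReal) = (fun t => |g t| ^ N) := by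
      funext x
      rw [ENNReal.toReal_ofReal hNpos.le, Real.norm_eq_abs, Real.rpow_natCast]
    rw [this]
    exact hgNab
  have hmem1 : MemLp (fun _ : ℝ => (1:ℝ)) (ENNReal.ofReal q) μ := memLp_const 1
  have key := MeasureTheory.integral_mul_le_Lp_mul_Lq_of_nonneg hpq
    (f := fun t => |g t|) (g := fun _ => 1) (μ := μ)
    (Filter.Eventually.of_forall fun x => abs_nonneg _)
    (Filter.Eventually.of_forall fun x => zero_le_one)
    (by simpa [Real.norm_eq_abs] using hmem.norm) hmem1
  simp only [mul_one] at key
  have e1 : (∫ x, |g x| ^ (N:ℝ) ∂μ) = ∫ t in Set.Ioc a b, |g t| ^ N := by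
    rw [hμ]; congr 1; funext x; rw [Real.rpow_natCast]
  have e2 : (∫ _x, (1:ℝ) ^ q ∂μ) = b - a := by
    rw [Real.one_rpow] <;> simp [hμ, Real.volume_Ioc, ENNReal.toReal_ofReal (sub_nonneg.2 hab), hab]
  rw [e1, e2] at key
  have hI0 : 0 ≤ ∫ t in Set.Ioc a b, |g t| ^ N :=
    MeasureTheory.setIntegral_nonneg measurableSet_Ioc (fun x _ => by positivity)
  have hI1 : (∫ t in Set.Ioc a b, |g t| ^ N) ≤ 1 :=
    le_trans (MeasureTheory.setIntegral_mono_set hgN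
      (Filter.Eventually.of_forall fun x => by positivity)
      (HasSubset.Subset.eventuallyLE hsub)) hg1
  have h1 : (∫ t in Set.Ioc a b, |g t| ^ N) ^ (1/(N:ℝ)) ≤ 1 :=
    Real.rpow_le_one hI0 hI1 (by positivity)
  have h2 : (b-a) ^ (1/q) = (b-a) ^ (((N:ℝ)-1)/N) := by
    rw [hq, one_div, inv_div]
  calc (∫ t in Set.Ioc a b, |g t|)
      ≤ (∫ t in Set.Ioc a b, |g t| ^ N) ^ (1/(N:ℝ)) * (b-a) ^ (1/q) := key
    _ = (∫ t in Set.Ioc a b, |g t| ^ N) ^ (1/(N:ℝ)) * (b-a) ^ (((N:ℝ)-1)/N) := by rw [h2]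
    _ ≤ 1 * (b-a) ^ (((N:ℝ)-1)/N) :=
        mul_le_mul_of_nonneg_right h1 (Real.rpow_nonneg (sub_nonneg.2 hab) _)
    _ = _ := one_mul _


lemma approx_err (h : ℝ → ℝ) (hh : MeasureTheory.IntegrableOn h (Set.Ioc (0:ℝ) 1))
    (s δ : ℝ) (hδ : 0 < δ) (hδs : δ < s) (hs1 : s ≤ 1) :
    |(∫ t in Set.Ioc (0:ℝ) 1, h t * (max 0 (min 1 ((s - t)/δ)))) -
      ∫ t in Set.Ioc (0:ℝ) s, h t| ≤ ∫ t in Set.Ioc (s - δ) s, |h t| := by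
  set φ : ℝ → ℝ := fun t => max 0 (min 1 ((s - t)/δ)) with hφdef
  have hs0 : 0 < s := lt_trans hδ hδs
  have hφ0 : ∀ t, 0 ≤ φ t := fun t => le_max_left _ _
  have hφ1 : ∀ t, φ t ≤ 1 := fun t => max_le (zero_le_one) (min_le_left _ _)
  have hφcont : Continuous φ := by
    apply Continuous.max continuous_const
    apply Continuous.min continuous_const
    fun_prop
  have hφone : ∀ t ≤ s - δ, φ t = 1 := by
    intro t ht
    have : (1:ℝ) ≤ (s - t)/δ := (le_div_iff₀ hδ).2 (by linarith)
    simp [hφdef, min_eq_left this, this]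
  have hφzero : ∀ t, s ≤ t → φ t = 0 := by
    intro t ht
    have : (s - t)/δ ≤ 0 := div_nonpos_of_nonpos_of_nonneg (by linarith) hδ.le
    have h2 : min 1 ((s-t)/δ) ≤ 0 := le_trans (min_le_right _ _) this
    simp [hφdef, max_eq_left h2]
  -- integrability
  have hbdd : ∃ C, ∀ x, ‖φ x‖ ≤ C :=
    ⟨1, fun x => by rw [Real.norm_eq_abs, abs_of_nonneg (hφ0 x)]; exact hφ1 x⟩
  have hhφ : MeasureTheory.IntegrableOn (fun t => h t * φ t) (Set.Ioc (0:ℝ) 1) := by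
    have := MeasureTheory.Integrable.bdd_mul hh (hφcont.aestronglyMeasurable.restrict) (ae_of_all _ hbdd.choose_spec)
    exact this.congr (Filter.Eventually.of_forall fun x => mul_comm _ _)
  have hsub1 : Set.Ioc (0:ℝ) s ⊆ Set.Ioc (0:ℝ) 1 := Set.Ioc_subset_Ioc le_rfl hs1
  have hsub2 : Set.Ioc (s-δ) s ⊆ Set.Ioc (0:ℝ) 1 :=
    Set.Ioc_subset_Ioc (by linarith) hs1
  have hsub3 : Set.Ioc (0:ℝ) (s-δ) ⊆ Set.Ioc (0:ℝ) 1 := Set.Ioc_subset_Ioc le_rfl (by linarith)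
  -- split ∫_{Ioc 0 1} h φ  =  ∫_{Ioc 0 s} h φ
  have e1 : (∫ t in Set.Ioc (0:ℝ) 1, h t * φ t) = ∫ t in Set.Ioc (0:ℝ) s, h t * φ t := by
    rw [← Set.Ioc_union_Ioc_eq_Ioc hs0.le hs1,
      MeasureTheory.setIntegral_union (Set.Ioc_disjoint_Ioc_of_le le_rfl) measurableSet_Ioc
        (hhφ.mono_set hsub1) (hhφ.mono_set (Set.Ioc_subset_Ioc hs0.le le_rfl))]
    have : (∫ t in Set.Ioc s 1, h t * φ t) = 0 := by
      rw [MeasureTheory.setIntegral_congr_fun measurableSet_Ioc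
        (fun x hx => by simp [hφzero x hx.1.le] : Set.EqOn (fun t => h t * φ t) 0 _)]
      simp
    rw [this, add_zero]
  have e2 : (∫ t in Set.Ioc (0:ℝ) s, h t * φ t) =
      (∫ t in Set.Ioc (0:ℝ) (s-δ), h t) + ∫ t in Set.Ioc (s-δ) s, h t * φ t := by
    rw [← Set.Ioc_union_Ioc_eq_Ioc (by linarith : (0:ℝ) ≤ s - δ) (by linarith : s - δ ≤ s),
      MeasureTheory.setIntegral_union (Set.Ioc_disjoint_Ioc_of_le le_rfl) measurableSet_Ioc
        (hhφ.mono_set hsub3) (hhφ.mono_set hsub2)]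
    congr 1
    exact MeasureTheory.setIntegral_congr_fun measurableSet_Ioc
      (fun x hx => by rw [hφone x hx.2, mul_one])
  have e3 : (∫ t in Set.Ioc (0:ℝ) s, h t) =
      (∫ t in Set.Ioc (0:ℝ) (s-δ), h t) + ∫ t in Set.Ioc (s-δ) s, h t := by
    rw [← Set.Ioc_union_Ioc_eq_Ioc (by linarith : (0:ℝ) ≤ s - δ) (by linarith : s - δ ≤ s),
      MeasureTheory.setIntegral_union (Set.Ioc_disjoint_Ioc_of_le le_rfl) measurableSet_Ioc
        (hh.mono_set hsub3) (hh.mono_set hsub2)]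
  rw [e1, e2, e3]
  have e4 : (∫ t in Set.Ioc (0:ℝ) (s-δ), h t) + (∫ t in Set.Ioc (s-δ) s, h t * φ t) -
      ((∫ t in Set.Ioc (0:ℝ) (s-δ), h t) + ∫ t in Set.Ioc (s-δ) s, h t) =
      ∫ t in Set.Ioc (s-δ) s, (h t * φ t - h t) := by
    rw [MeasureTheory.integral_sub (hhφ.mono_set hsub2) (hh.mono_set hsub2)]; ring
  rw [e4]
  calc |∫ t in Set.Ioc (s-δ) s, (h t * φ t - h t)|
      ≤ ∫ t in Set.Ioc (s-δ) s, |h t * φ t - h t| :=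
        by simpa [Real.norm_eq_abs] using
          MeasureTheory.norm_integral_le_integral_norm (μ := MeasureTheory.volume.restrict (Set.Ioc (s-δ) s)) (fun t => h t * φ t - h t)
    _ ≤ ∫ t in Set.Ioc (s-δ) s, |h t| := by
        apply MeasureTheory.setIntegral_mono_on
          ((hhφ.mono_set hsub2).sub (hh.mono_set hsub2)).abs (hh.mono_set hsub2).abs
          measurableSet_Ioc
        intro x _
        simp only [Pi.sub_apply]
        have : |h x * φ x - h x| = |h x| * |φ x - 1| := by
          rw [← abs_mul]; ring_nf
        rw [this]
        have h1 : |φ x - 1| ≤ 1 := abs_le.2 ⟨by linarith [hφ0 x], by linarith [hφ1 x]⟩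
        calc |h x| * |φ x - 1| ≤ |h x| * 1 :=
              mul_le_mul_of_nonneg_left h1 (abs_nonneg _)
          _ = |h x| := mul_one _

lemma key_tendsto (N : ℕ) (hN : 2 ≤ N) (g : ℕ → ℝ → ℝ)
    (hgi : ∀ n, IntervalIntegrable (g n) MeasureTheory.volume 0 1)
    (hgN : ∀ n, MeasureTheory.IntegrableOn (fun t => |g n t| ^ N) (Set.Ioc (0:ℝ) 1))
    (hg1 : ∀ n, (∫ t in Set.Ioc (0:ℝ) 1, |g n t| ^ N) ≤ 1)
    (glim : ℝ → ℝ) (hint : IntervalIntegrable glim MeasureTheory.volume 0 1)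
    (hweakg : ∀ φ : ℝ → ℝ, ContinuousOn φ (Set.Icc 0 1) →
      Filter.Tendsto (fun n => ∫ t in Set.Ioc (0:ℝ) 1, g n t * φ t) Filter.atTop
        (nhds (∫ t in Set.Ioc (0:ℝ) 1, glim t * φ t)))
    (s : ℝ) (hs : s ∈ Set.Ioc (0:ℝ) 1) :
    Filter.Tendsto (fun n => ∫ t in Set.Ioc (0:ℝ) s, g n t) Filter.atTop
      (nhds (∫ t in Set.Ioc (0:ℝ) s, glim t)) := by
  obtain ⟨hs0, hs1⟩ := hs
  have hglimI : MeasureTheory.IntegrableOn glim (Set.Ioc (0:ℝ) 1) := by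
    simpa using hint.1
  rw [Metric.tendsto_atTop]
  intro ε hε
  -- choose δ
  have hc : (0:ℝ) < ((N:ℝ) - 1)/N := by
    have : (2:ℝ) ≤ N := by exact_mod_cast hN
    apply div_pos <;> linarith
  have E1 : ∀ᶠ δ in nhdsWithin (0:ℝ) (Set.Ioi 0), δ < s :=
    eventually_nhdsWithin_of_eventually_nhds (eventually_lt_nhds hs0)
  have E2 : ∀ᶠ δ in nhdsWithin (0:ℝ) (Set.Ioi 0), δ ^ (((N:ℝ) - 1)/N) < ε/3 := by
    have ht : Filter.Tendsto (fun δ : ℝ => δ ^ (((N:ℝ) - 1)/N))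
        (nhdsWithin (0:ℝ) (Set.Ioi 0)) (nhds 0) := by
      have := (Real.continuousAt_rpow_const 0 (((N:ℝ) - 1)/N) (Or.inr hc.le)).tendsto
      rw [Real.zero_rpow hc.ne'] at this
      exact this.mono_left nhdsWithin_le_nhds
    exact ht.eventually (eventually_lt_nhds (by positivity))
  set f : ℝ → ℝ := (Set.Ioc (0:ℝ) 1).indicator (fun t => |glim t|) with hfdef
  have hfint : MeasureTheory.Integrable f MeasureTheory.volume := by
    rw [hfdef, MeasureTheory.integrable_indicator_iff measurableSet_Ioc]
    exact hglimI.abs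
  have hmeas : Filter.Tendsto
      (fun δ : ℝ => MeasureTheory.volume (Set.Ioc (s - δ) s))
      (nhdsWithin (0:ℝ) (Set.Ioi 0)) (nhds 0) := by
    have : (fun δ : ℝ => MeasureTheory.volume (Set.Ioc (s - δ) s)) =
        (fun δ : ℝ => ENNReal.ofReal δ) := by
      funext δ; rw [Real.volume_Ioc, sub_sub_cancel]
    rw [this]
    have := (ENNReal.continuous_ofReal.tendsto 0).mono_left
      (nhdsWithin_le_nhds (s := Set.Ioi (0:ℝ)))
    simpa using this
  have E3 : ∀ᶠ δ in nhdsWithin (0:ℝ) (Set.Ioi 0),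
      (∫ t in Set.Ioc (s - δ) s, f t) < ε/3 := by
    have ht := hfint.tendsto_setIntegral_nhds_zero hmeas
    exact ht.eventually (eventually_lt_nhds (by positivity))
  obtain ⟨δ, ⟨⟨hδs, hδr⟩, hδglim⟩, hδ0⟩ := ((E1.and E2).and E3).and self_mem_nhdsWithin
    |>.exists
  -- the chosen test function
  set φ : ℝ → ℝ := fun t => max 0 (min 1 ((s - t)/δ)) with hφdef
  have hφcont : Continuous φ := by
    apply Continuous.max continuous_const
    apply Continuous.min continuous_const
    fun_prop
  have hglimerr : (∫ t in Set.Ioc (s - δ) s, |glim t|) < ε/3 := by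
    have : (∫ t in Set.Ioc (s - δ) s, f t) = ∫ t in Set.Ioc (s - δ) s, |glim t| := by
      rw [hfdef, MeasureTheory.setIntegral_indicator measurableSet_Ioc,
        Set.inter_eq_left.2 (Set.Ioc_subset_Ioc (by linarith) hs1)]
    rwa [this] at hδglim
  -- weak convergence against φ
  have hw := hweakg φ hφcont.continuousOn
  rw [Metric.tendsto_atTop] at hw
  obtain ⟨K, hK⟩ := hw (ε/3) (by positivity)
  refine ⟨K, fun n hn => ?_⟩
  have herrn : |(∫ t in Set.Ioc (0:ℝ) 1, g n t * φ t) -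
      ∫ t in Set.Ioc (0:ℝ) s, g n t| < ε/3 := by
    refine lt_of_le_of_lt (approx_err (g n) (by simpa using (hgi n).1) s δ hδ0 hδs hs1) ?_
    calc (∫ t in Set.Ioc (s - δ) s, |g n t|)
        ≤ (s - (s - δ)) ^ (((N:ℝ) - 1)/N) :=
          holder_small N hN (g n) (hgi n) (hgN n) (hg1 n) (s - δ) s
            (by linarith) (by linarith) hs1
      _ = δ ^ (((N:ℝ) - 1)/N) := by rw [sub_sub_cancel]
      _ < ε/3 := hδr
  have herrlim : |(∫ t in Set.Ioc (0:ℝ) 1, glim t * φ t) -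
      ∫ t in Set.Ioc (0:ℝ) s, glim t| < ε/3 :=
    lt_of_le_of_lt (approx_err glim hglimI s δ hδ0 hδs hs1) hglimerr
  have hmid : dist (∫ t in Set.Ioc (0:ℝ) 1, g n t * φ t)
      (∫ t in Set.Ioc (0:ℝ) 1, glim t * φ t) < ε/3 := hK n hn
  rw [Real.dist_eq] at hmid ⊢
  calc |(∫ t in Set.Ioc (0:ℝ) s, g n t) - ∫ t in Set.Ioc (0:ℝ) s, glim t|
      ≤ |(∫ t in Set.Ioc (0:ℝ) s, g n t) - (∫ t in Set.Ioc (0:ℝ) 1, g n t * φ t)| +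
        |(∫ t in Set.Ioc (0:ℝ) 1, g n t * φ t) - (∫ t in Set.Ioc (0:ℝ) 1, glim t * φ t)| +
        |(∫ t in Set.Ioc (0:ℝ) 1, glim t * φ t) - ∫ t in Set.Ioc (0:ℝ) s, glim t| := by
        have h1 := abs_sub_le (∫ t in Set.Ioc (0:ℝ) s, g n t)
          (∫ t in Set.Ioc (0:ℝ) 1, g n t * φ t) (∫ t in Set.Ioc (0:ℝ) s, glim t)
        have h2 := abs_sub_le (∫ t in Set.Ioc (0:ℝ) 1, g n t * φ t)
          (∫ t in Set.Ioc (0:ℝ) 1, glim t * φ t) (∫ t in Set.Ioc (0:ℝ) s, glim t)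
        linarith
    _ < ε/3 + ε/3 + ε/3 := by
        apply add_lt_add (add_lt_add _ hmid) herrlim
        rw [abs_sub_comm]; exact herrn
    _ = ε := by ring

/-- for `0 < β < 1`, the functional `I_β` is weakly continuous on `E_N`:
if `u n ∈ E_N` (with weak derivatives `g n`) converges weakly in `W^{1,N}(0,1)` to `ulim`
(with weak derivative `glim`) — weak convergence being expressed by convergence of the
pairings of `u n` and of `g n` against every continuous test function — then
`I_β (u n) → I_β (ulim)`. -/
theorem Ifun_weakly_continuous (N : ℕ) (hN : 2 ≤ N) (β : ℝ) (hβ0 : 0 < β) (hβ : β < 1)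
    (u g : ℕ → ℝ → ℝ) (hu : ∀ n, MemEN N (u n) (g n))
    (ulim glim : ℝ → ℝ)
    (hrep : ∀ s ∈ Set.Icc (0:ℝ) 1, ulim s = ∫ t in (0:ℝ)..s, glim t)
    (hint : IntervalIntegrable glim MeasureTheory.volume 0 1)
    (hweak : ∀ φ : ℝ → ℝ, ContinuousOn φ (Set.Icc 0 1) →
      Filter.Tendsto (fun n => ∫ t in Set.Ioc (0:ℝ) 1, u n t * φ t) Filter.atTop
        (nhds (∫ t in Set.Ioc (0:ℝ) 1, ulim t * φ t)) ∧
      Filter.Tendsto (fun n => ∫ t in Set.Ioc (0:ℝ) 1, g n t * φ t) Filter.atTop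
        (nhds (∫ t in Set.Ioc (0:ℝ) 1, glim t * φ t))) :
    Filter.Tendsto (fun n => Ifun N β (u n)) Filter.atTop (nhds (Ifun N β ulim)) := by
  have hgi : ∀ n, IntervalIntegrable (g n) MeasureTheory.volume 0 1 := fun n => (hu n).2.2.1
  have hgN : ∀ n, MeasureTheory.IntegrableOn (fun t => |g n t| ^ N) (Set.Ioc (0:ℝ) 1) :=
    fun n => (hu n).2.2.2.1
  have hg1 : ∀ n, (∫ t in Set.Ioc (0:ℝ) 1, |g n t| ^ N) ≤ 1 := fun n => le_of_eq (hu n).2.2.2.2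
  have hrepn : ∀ n, ∀ s ∈ Set.Icc (0:ℝ) 1, u n s = ∫ t in (0:ℝ)..s, g n t := fun n => (hu n).1
  have hN1 : (1:ℝ) < N := by exact_mod_cast lt_of_lt_of_le one_lt_two hN
  -- the integrand as a function of s, for the n-th term
  set F : ℕ → ℝ → ℝ := fun n s =>
    Real.exp (β * Real.log (Real.exp 1 / s) * ((∫ t in (0:ℝ)..s, g n t) ^ N / s ^ (N - 1)))
    with hF
  set Flim : ℝ → ℝ := fun s =>
    Real.exp (β * Real.log (Real.exp 1 / s) * (ulim s ^ N / s ^ (N - 1))) with hFlim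
  have hIF : ∀ n, Ifun N β (u n) = ∫ s in Set.Ioc (0:ℝ) 1, F n s := by
    intro n
    exact MeasureTheory.setIntegral_congr_fun measurableSet_Ioc fun s hs => by
      rw [hF]; rw [hrepn n s (Set.Ioc_subset_Icc_self hs)]
  simp only [funext fun n => hIF n]
  -- the bound
  set bound : ℝ → ℝ := fun s => Real.exp β * s ^ (-β) with hbd
  have hbound_int : MeasureTheory.IntegrableOn bound (Set.Ioc (0:ℝ) 1) := by
    have : IntervalIntegrable (fun s : ℝ => s ^ (-β)) MeasureTheory.volume 0 1 :=
      intervalIntegral.intervalIntegrable_rpow' (by linarith)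
    exact (this.1.const_mul _)
  -- basic facts about points of Ioc 0 1
  have hlogpos : ∀ s : ℝ, s ∈ Set.Ioc (0:ℝ) 1 → 0 ≤ Real.log (Real.exp 1 / s) := by
    intro s hs
    apply Real.log_nonneg
    rw [le_div_iff₀ hs.1]
    calc (1:ℝ) * s ≤ 1 := by rw [one_mul]; exact hs.2
      _ ≤ Real.exp 1 := by linarith [Real.add_one_le_exp 1]
  -- pointwise bound for the primitive
  have hprim : ∀ n, ∀ s : ℝ, s ∈ Set.Ioc (0:ℝ) 1 →
      ((∫ t in (0:ℝ)..s, g n t) ^ N / s ^ (N - 1)) ≤ 1 := by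
    intro n s hs
    rw [div_le_one (pow_pos hs.1 _)]
    have h1 : |∫ t in (0:ℝ)..s, g n t| ≤ s ^ (((N:ℝ) - 1)/N) := by
      rw [intervalIntegral.integral_of_le hs.1.le]
      calc |∫ t in Set.Ioc (0:ℝ) s, g n t| ≤ ∫ t in Set.Ioc (0:ℝ) s, |g n t| := by
            simpa [Real.norm_eq_abs] using MeasureTheory.norm_integral_le_integral_norm
              (μ := MeasureTheory.volume.restrict (Set.Ioc (0:ℝ) s)) (g n)
        _ ≤ (s - 0) ^ (((N:ℝ) - 1)/N) :=
            holder_small N hN (g n) (hgi n) (hgN n) (hg1 n) 0 s le_rfl hs.1.le hs.2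
        _ = s ^ (((N:ℝ) - 1)/N) := by rw [sub_zero]
    calc (∫ t in (0:ℝ)..s, g n t) ^ N ≤ |(∫ t in (0:ℝ)..s, g n t) ^ N| := le_abs_self _
      _ = |∫ t in (0:ℝ)..s, g n t| ^ N := by rw [abs_pow]
      _ ≤ (s ^ (((N:ℝ) - 1)/N)) ^ N := pow_le_pow_left₀ (abs_nonneg _) h1 N
      _ = s ^ (N - 1) := by
          rw [← Real.rpow_natCast (s ^ (((N:ℝ) - 1)/N)) N, ← Real.rpow_mul hs.1.le,
            div_mul_cancel₀ _ (by positivity : (N:ℝ) ≠ 0),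
            ← Real.rpow_natCast s (N - 1)]
          congr 1
          rw [Nat.cast_sub (by omega : 1 ≤ N), Nat.cast_one]
  have hbound_eq : ∀ s : ℝ, s ∈ Set.Ioc (0:ℝ) 1 →
      Real.exp (β * Real.log (Real.exp 1 / s)) = bound s := by
    intro s hs
    simp only [hbd]
    rw [Real.log_div (Real.exp_ne_zero 1) hs.1.ne', Real.log_exp,
      Real.rpow_def_of_pos hs.1, mul_sub, mul_one, Real.exp_sub, div_eq_mul_inv,
      ← Real.exp_neg]
    congr 1
    ring
  have h_bound : ∀ n, ∀ᵐ s ∂(MeasureTheory.volume.restrict (Set.Ioc (0:ℝ) 1)),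
      ‖F n s‖ ≤ bound s := by
    intro n
    rw [MeasureTheory.ae_restrict_iff' measurableSet_Ioc]
    refine Filter.Eventually.of_forall fun s hs => ?_
    rw [hF, Real.norm_eq_abs, Real.abs_exp, ← hbound_eq s hs]
    apply Real.exp_le_exp.2
    calc β * Real.log (Real.exp 1 / s) * ((∫ t in (0:ℝ)..s, g n t) ^ N / s ^ (N - 1))
        ≤ β * Real.log (Real.exp 1 / s) * 1 :=
          mul_le_mul_of_nonneg_left (hprim n s hs)
            (mul_nonneg hβ0.le (hlogpos s hs))
      _ = β * Real.log (Real.exp 1 / s) := mul_one _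
  -- measurability
  have hFmeas : ∀ n, MeasureTheory.AEStronglyMeasurable (F n)
      (MeasureTheory.volume.restrict (Set.Ioc (0:ℝ) 1)) := by
    intro n
    have hU : ContinuousOn (fun s => ∫ t in (0:ℝ)..s, g n t) (Set.Icc 0 1) := by
      have := intervalIntegral.continuousOn_primitive_interval' (hgi n)
        (by simp : (0:ℝ) ∈ Set.uIcc (0:ℝ) 1)
      simpa using this
    have hcont : ContinuousOn (F n) (Set.Ioc (0:ℝ) 1) := by
      rw [hF]
      apply Real.continuous_exp.comp_continuousOn
      apply ContinuousOn.mul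
      · apply ContinuousOn.mul continuousOn_const
        apply ContinuousOn.log
        · exact continuousOn_const.div continuousOn_id fun x hx => hx.1.ne'
        · exact fun x hx => div_ne_zero (Real.exp_ne_zero 1) hx.1.ne'
      · apply ContinuousOn.div
        · exact ((hU.mono Set.Ioc_subset_Icc_self).pow N)
        · exact (continuousOn_id.pow (N - 1))
        · exact fun x hx => pow_ne_zero _ hx.1.ne'
    exact hcont.aestronglyMeasurable measurableSet_Ioc
  -- pointwise convergence
  have h_lim : ∀ᵐ s ∂(MeasureTheory.volume.restrict (Set.Ioc (0:ℝ) 1)),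
      Filter.Tendsto (fun n => F n s) Filter.atTop (nhds (Flim s)) := by
    rw [MeasureTheory.ae_restrict_iff' measurableSet_Ioc]
    refine Filter.Eventually.of_forall fun s hs => ?_
    have hkey := key_tendsto N hN g hgi hgN hg1 glim hint
      (fun φ hφ => (hweak φ hφ).2) s hs
    have hUconv : Filter.Tendsto (fun n => ∫ t in (0:ℝ)..s, g n t) Filter.atTop
        (nhds (ulim s)) := by
      rw [hrep s (Set.Ioc_subset_Icc_self hs), intervalIntegral.integral_of_le hs.1.le]
      simpa only [intervalIntegral.integral_of_le hs.1.le] using hkey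
    have hc : Continuous (fun x : ℝ =>
        Real.exp (β * Real.log (Real.exp 1 / s) * (x ^ N / s ^ (N - 1)))) := by
      apply Real.continuous_exp.comp
      exact continuous_const.mul ((continuous_pow N).div_const _)
    exact (hc.tendsto (ulim s)).comp hUconv
  exact MeasureTheory.tendsto_integral_of_dominated_convergence bound hFmeas
    (hbound_int) h_bound h_lim
end

section
/- Let N ≥ 2 be an integer and β > 1. Then along the infinitesimal Moser sequence w_j one has I_β(w_j) = ∫₀¹ exp( β · log(e/s) · w_j(s)^N / s^{N−1} ) ds → +∞ as j → ∞. In particular sup_{v ∈ E_N} I_β(v) = +∞ for every β > 1. -/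
open MeasureTheory Real Set Filter

/-- The infinitesimal Moser sequence `w_j`. -/
noncomputable def moser (N j : ℕ) (t : ℝ) : ℝ :=
  if t ≤ 1 / (j : ℝ) then (j : ℝ) ^ ((1:ℝ) / N) * t
  else (j : ℝ) ^ (-(((N:ℝ) - 1) / N))

/- ------------------ auxiliary lemmas ------------------ -/

lemma moser_measurable (N j : ℕ) : Measurable (moser N j) := by
  unfold moser
  exact Measurable.ite (measurableSet_le measurable_id measurable_const)
    (measurable_const.mul measurable_id) measurable_const

lemma rpow_pow_aux (j : ℕ) {N : ℕ} (hN : N ≠ 0) : (((j:ℝ)) ^ ((1:ℝ)/N)) ^ N = j := by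
  have hNne : (N:ℝ) ≠ 0 := Nat.cast_ne_zero.mpr hN
  rw [← Real.rpow_natCast ((j:ℝ) ^ ((1:ℝ)/N)) N, ← Real.rpow_mul (Nat.cast_nonneg j),
    one_div, inv_mul_cancel₀ hNne, Real.rpow_one]

lemma rpow_negpow_aux (j : ℕ) {N : ℕ} (hN : 1 ≤ N) :
    ((j:ℝ) ^ (-(((N:ℝ)-1)/N))) ^ N = ((j:ℝ) ^ (N-1))⁻¹ := by
  have hNne : (N:ℝ) ≠ 0 := Nat.cast_ne_zero.mpr (by omega)
  rw [← Real.rpow_natCast ((j:ℝ) ^ (-(((N:ℝ)-1)/N))) N, ← Real.rpow_mul (Nat.cast_nonneg j)]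
  have h1 : -(((N:ℝ)-1)/N) * N = -((N:ℝ)-1) := by field_simp
  rw [h1, Real.rpow_neg (Nat.cast_nonneg j)]
  congr 1
  rw [show ((N:ℝ)-1) = ((N-1:ℕ):ℝ) by rw [Nat.cast_sub hN, Nat.cast_one], Real.rpow_natCast]

lemma exponent_eq (N j : ℕ) (hN : 1 ≤ N) {s : ℝ} (hs0 : 0 < s) (hsj : s ≤ 1/(j:ℝ)) :
    moser N j s ^ N / s ^ (N-1) = (j:ℝ) * s := by
  rw [moser, if_pos hsj, mul_pow, rpow_pow_aux j (by omega)]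
  have h1 : s ^ N = s ^ (N-1) * s := by
    rw [← pow_succ]; congr 1; omega
  rw [h1, show (j:ℝ) * (s^(N-1) * s) = ((j:ℝ) * s) * s^(N-1) by ring,
    mul_div_assoc, div_self (pow_ne_zero _ hs0.ne'), mul_one]

lemma log_e_div {s : ℝ} (hs : s ≠ 0) : Real.log (Real.exp 1 / s) = 1 - Real.log s := by
  rw [Real.log_div (Real.exp_ne_zero 1) hs, Real.log_exp]

lemma integrand_measurable (N j : ℕ) (β : ℝ) :
    Measurable (fun s : ℝ =>
      Real.exp (β * Real.log (Real.exp 1 / s) * (moser N j s ^ N / s ^ (N - 1)))) := by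
  apply Real.measurable_exp.comp
  exact ((measurable_const.mul
      (Real.measurable_log.comp (measurable_const.div measurable_id))).mul
    (((moser_measurable N j).pow_const N).div (measurable_id.pow_const (N-1))))

lemma integrableOn_integrand (N : ℕ) (hN : 2 ≤ N) (β : ℝ) (hβ : 0 < β) (j : ℕ) (hj : 1 ≤ j) :
    IntegrableOn (fun s : ℝ =>
      Real.exp (β * Real.log (Real.exp 1 / s) * (moser N j s ^ N / s ^ (N - 1))))
      (Set.Ioc (0:ℝ) 1) := by
  have hj0 : (0:ℝ) < j := by exact_mod_cast hj
  apply Integrable.mono' (integrable_const (Real.exp (β * (1 + j))))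
    (integrand_measurable N j β).aestronglyMeasurable
  rw [ae_restrict_iff' measurableSet_Ioc]
  apply ae_of_all
  intro s hs
  obtain ⟨hs0, hs1⟩ := hs
  rw [Real.norm_eq_abs, abs_of_pos (Real.exp_pos _), Real.exp_le_exp, log_e_div hs0.ne']
  have hlog0 : Real.log s ≤ 0 := Real.log_nonpos hs0.le hs1
  have hinv : -Real.log s ≤ s⁻¹ - 1 := by
    have := Real.log_le_sub_one_of_pos (inv_pos.mpr hs0)
    rwa [Real.log_inv] at this
  rw [mul_assoc]
  apply mul_le_mul_of_nonneg_left _ hβ.le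
  by_cases hcase : s ≤ 1/(j:ℝ)
  · rw [exponent_eq N j (by omega) hs0 hcase]
    have hjs : (j:ℝ) * s ≤ 1 := by
      calc (j:ℝ) * s ≤ (j:ℝ) * (1/(j:ℝ)) := mul_le_mul_of_nonneg_left hcase hj0.le
        _ = 1 := by field_simp
    have hls : -Real.log s * s ≤ 1 - s := by
      have := mul_le_mul_of_nonneg_right hinv hs0.le
      calc -Real.log s * s ≤ (s⁻¹ - 1) * s := this
        _ = 1 - s := by field_simp
    nlinarith [mul_le_mul_of_nonneg_left hls (hj0.le), hj0.le, hs0.le]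
  · push_neg at hcase
    rw [moser, if_neg (not_le.mpr hcase), rpow_negpow_aux j (by omega)]
    have hrat : ((j:ℝ) ^ (N-1))⁻¹ / s ^ (N-1) ≤ 1 := by
      rw [div_le_one (pow_pos hs0 _)]
      calc ((j:ℝ) ^ (N-1))⁻¹ = (1/(j:ℝ)) ^ (N-1) := by rw [one_div, inv_pow]
        _ ≤ s ^ (N-1) := pow_le_pow_left₀ (by positivity) hcase.le _
    have hlog1 : 1 - Real.log s ≤ 1 + j := by
      have hsj : s⁻¹ ≤ (j:ℝ) := by
        rw [inv_le_comm₀ hs0 hj0]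
        rw [one_div] at hcase
        exact hcase.le
      nlinarith
    have h0 : (0:ℝ) ≤ 1 - Real.log s := by linarith
    calc (1 - Real.log s) * (((j:ℝ) ^ (N-1))⁻¹ / s ^ (N-1)) ≤ (1 + j) * 1 :=
          mul_le_mul hlog1 hrat (by positivity) (by positivity)
      _ = 1 + j := mul_one _

lemma Ifun_moser_lb (N : ℕ) (hN : 2 ≤ N) (β : ℝ) (hβ : 1 < β) (j : ℕ) (hj : 1 ≤ j) :
    Real.exp (β * ((β+1)/(2*β)) * (1 + Real.log j)) * ((1 - (β+1)/(2*β)) * (1/(j:ℝ)))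
      ≤ Ifun N β (moser N j) := by
  have hβ0 : (0:ℝ) < β := by linarith
  set a : ℝ := (β+1)/(2*β) with ha
  have ha0 : 0 < a := by positivity
  have ha1 : a < 1 := by
    rw [ha, div_lt_one (by positivity)]; linarith
  have hj0 : (0:ℝ) < j := by exact_mod_cast hj
  have hj1 : 1/(j:ℝ) ≤ 1 := by
    rw [div_le_one hj0]; exact_mod_cast hj
  have hsub : Set.Ioc (a/(j:ℝ)) (1/(j:ℝ)) ⊆ Set.Ioc 0 1 :=
    Set.Ioc_subset_Ioc (by positivity) hj1
  have hint := integrableOn_integrand N hN β hβ0 j hj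
  set f : ℝ → ℝ := fun s =>
    Real.exp (β * Real.log (Real.exp 1 / s) * (moser N j s ^ N / s ^ (N - 1))) with hf
  have hpt : ∀ s ∈ Set.Ioc (a/(j:ℝ)) (1/(j:ℝ)),
      Real.exp (β * a * (1 + Real.log j)) ≤ f s := by
    intro s hs
    have hs0 : 0 < s := lt_trans (by positivity) hs.1
    rw [hf]
    simp only
    rw [exponent_eq N j (by omega) hs0 hs.2, log_e_div hs0.ne', Real.exp_le_exp]
    have h1 : 1 + Real.log j ≤ 1 - Real.log s := by
      have := Real.log_le_log hs0 hs.2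
      rw [one_div, Real.log_inv] at this
      linarith
    have h2 : a ≤ (j:ℝ) * s := by
      have := (div_lt_iff₀ hj0).mp hs.1
      nlinarith
    have h3 : (0:ℝ) ≤ 1 + Real.log j := by
      have := Real.log_nonneg (by exact_mod_cast hj : (1:ℝ) ≤ j)
      linarith
    calc β * a * (1 + Real.log j) = β * ((1 + Real.log j) * a) := by ring
      _ ≤ β * ((1 - Real.log s) * ((j:ℝ) * s)) := by
          apply mul_le_mul_of_nonneg_left _ hβ0.le
          exact mul_le_mul h1 h2 ha0.le (by linarith)
      _ = β * (1 - Real.log s) * ((j:ℝ) * s) := by ring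
  have hvol : (volume (Set.Ioc (a/(j:ℝ)) (1/(j:ℝ)))).toReal = (1 - a) * (1/(j:ℝ)) := by
    have hle : a/(j:ℝ) ≤ 1/(j:ℝ) := by gcongr
    rw [Real.volume_Ioc, ENNReal.toReal_ofReal (by linarith)]
    ring
  have hconst := setIntegral_ge_of_const_le (μ := volume) measurableSet_Ioc
    (measure_Ioc_lt_top.ne) hpt (hint.mono_set hsub)
  have hmono : ∫ s in Set.Ioc (a/(j:ℝ)) (1/(j:ℝ)), f s ≤ ∫ s in Set.Ioc (0:ℝ) 1, f s := by
    apply setIntegral_mono_set hint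
    · exact Filter.Eventually.of_forall (fun s => (Real.exp_pos _).le)
    · exact Filter.Eventually.of_forall hsub
  rw [measureReal_def, hvol, smul_eq_mul, mul_comm ((1 - a) * (1/(j:ℝ)))] at hconst
  calc Real.exp (β * a * (1 + Real.log j)) * ((1 - a) * (1/(j:ℝ)))
      ≤ ∫ s in Set.Ioc (a/(j:ℝ)) (1/(j:ℝ)), f s := hconst
    _ ≤ ∫ s in Set.Ioc (0:ℝ) 1, f s := hmono
    _ = Ifun N β (moser N j) := rfl

lemma memEN_moser (N : ℕ) (hN : 2 ≤ N) (j : ℕ) (hj : 1 ≤ j) :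
    MemEN N (moser N j) (fun t => if t ≤ 1/(j:ℝ) then (j:ℝ)^((1:ℝ)/N) else 0) := by
  set c : ℝ := (j:ℝ)^((1:ℝ)/N) with hc
  have hc0 : 0 ≤ c := Real.rpow_nonneg (Nat.cast_nonneg j) _
  have hj0 : (0:ℝ) < j := by exact_mod_cast hj
  have hj0' : (0:ℝ) < 1/(j:ℝ) := by positivity
  have hj1 : 1/(j:ℝ) ≤ 1 := by rw [div_le_one hj0]; exact_mod_cast hj
  set g : ℝ → ℝ := fun t => if t ≤ 1/(j:ℝ) then c else 0 with hg
  have hgmeas : Measurable g :=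
    Measurable.ite (measurableSet_le measurable_id measurable_const)
      measurable_const measurable_const
  have hcN : c ^ N = (j:ℝ) := by rw [hc]; exact rpow_pow_aux j (by omega)
  have hgint : IntervalIntegrable g volume 0 1 := by
    rw [intervalIntegrable_iff_integrableOn_Ioc_of_le zero_le_one]
    apply Integrable.mono' (integrable_const c) hgmeas.aestronglyMeasurable
    apply ae_of_all
    intro t
    show ‖if t ≤ 1/(j:ℝ) then c else 0‖ ≤ c
    by_cases h : t ≤ 1/(j:ℝ)
    · rw [if_pos h, Real.norm_eq_abs, abs_of_nonneg hc0]
    · rw [if_neg h, norm_zero]; exact hc0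
  have hconst_int : ∀ s : ℝ, 0 ≤ s → s ≤ 1/(j:ℝ) → ∫ t in (0:ℝ)..s, g t = c * s := by
    intro s hs0 hsj
    rw [intervalIntegral.integral_congr (g := fun _ => c) (fun t ht => by
      rw [Set.uIcc_of_le hs0] at ht
      exact if_pos (ht.2.trans hsj)), intervalIntegral.integral_const]
    rw [smul_eq_mul]; ring
  refine ⟨?_, ?_, hgint, ?_, ?_⟩
  · intro s hs
    by_cases hcase : s ≤ 1/(j:ℝ)
    · rw [hconst_int s hs.1 hcase, moser, if_pos hcase]
    · push_neg at hcase
      have hint1 : IntervalIntegrable g volume 0 (1/(j:ℝ)) := by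
        apply hgint.mono_set
        rw [Set.uIcc_of_le hj0'.le, Set.uIcc_of_le zero_le_one]
        exact Set.Icc_subset_Icc le_rfl hj1
      have hint2 : IntervalIntegrable g volume (1/(j:ℝ)) s := by
        apply hgint.mono_set
        rw [Set.uIcc_of_le hcase.le, Set.uIcc_of_le zero_le_one]
        exact Set.Icc_subset_Icc hj0'.le hs.2
      rw [← intervalIntegral.integral_add_adjacent_intervals hint1 hint2,
        hconst_int _ hj0'.le le_rfl]
      have e2 : ∫ t in (1/(j:ℝ))..s, g t = 0 := by
        rw [intervalIntegral.integral_of_le hcase.le]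
        apply setIntegral_eq_zero_of_forall_eq_zero
        intro t ht
        exact if_neg (not_le.mpr ht.1)
      rw [e2, add_zero, moser, if_neg (not_le.mpr hcase)]
      have h1j : (1:ℝ)/(j:ℝ) = (j:ℝ) ^ (-1:ℝ) := by
        rw [Real.rpow_neg_one, one_div]
      rw [hc, h1j, ← Real.rpow_add hj0]
      congr 1
      have hNne : (N:ℝ) ≠ 0 := Nat.cast_ne_zero.mpr (by omega)
      field_simp
      ring
  · rw [moser, if_pos hj0'.le]; ring
  · have habs0 : ∀ t : ℝ, |g t| ^ N = if t ≤ 1/(j:ℝ) then (j:ℝ) else 0 := by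
      intro t
      show |if t ≤ 1/(j:ℝ) then c else 0| ^ N = _
      by_cases h : t ≤ 1/(j:ℝ)
      · rw [if_pos h, if_pos h, abs_of_nonneg hc0, hcN]
      · rw [if_neg h, if_neg h, abs_zero, zero_pow (by omega : N ≠ 0)]
    apply Integrable.mono' (integrable_const ((j:ℝ)))
      ((hgmeas.abs.pow_const N).aestronglyMeasurable)
    apply ae_of_all
    intro t
    rw [Real.norm_eq_abs, abs_of_nonneg (by positivity), habs0 t]
    by_cases h : t ≤ 1/(j:ℝ)
    · rw [if_pos h]
    · rw [if_neg h]; positivity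
  · have habs : ∀ t : ℝ, |g t| ^ N = Set.indicator (Set.Iic (1/(j:ℝ))) (fun _ => (j:ℝ)) t := by
      intro t
      show |if t ≤ 1/(j:ℝ) then c else 0| ^ N = _
      rw [Set.indicator_apply]
      by_cases h : t ≤ 1/(j:ℝ)
      · rw [if_pos h, if_pos (Set.mem_Iic.mpr h), abs_of_nonneg hc0, hcN]
      · rw [if_neg h, if_neg (fun hh => h (Set.mem_Iic.mp hh)), abs_zero,
          zero_pow (by omega : N ≠ 0)]
    rw [show (fun t => |g t| ^ N) = Set.indicator (Set.Iic (1/(j:ℝ))) (fun _ => (j:ℝ)) from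
      funext habs]
    rw [setIntegral_indicator measurableSet_Iic,
      show Set.Ioc (0:ℝ) 1 ∩ Set.Iic (1/(j:ℝ)) = Set.Ioc 0 (1/(j:ℝ)) by
        rw [Set.Ioc_inter_Iic, min_eq_right hj1]]
    rw [setIntegral_const, measureReal_def, Real.volume_Ioc, smul_eq_mul,
      ENNReal.toReal_ofReal (by linarith : (0:ℝ) ≤ 1/(j:ℝ) - 0)]
    field_simp
    simp

/-- for `β > 1`, `I_β (w_j) → +∞` along the infinitesimal Moser sequence;
in particular the supremum of `I_β` over `E_N` is infinite. -/
theorem Ifun_moser_tendsto_atTop (N : ℕ) (hN : 2 ≤ N) (β : ℝ) (hβ : 1 < β) :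
    Filter.Tendsto (fun j : ℕ => Ifun N β (moser N j)) Filter.atTop Filter.atTop ∧
    (∀ C : ℝ, ∃ u g : ℝ → ℝ, MemEN N u g ∧ C < Ifun N β u) := by
  have hβ0 : (0:ℝ) < β := by linarith
  set a : ℝ := (β+1)/(2*β) with ha
  have ha0 : 0 < a := by positivity
  have ha1 : a < 1 := by rw [ha, div_lt_one (by positivity)]; linarith
  have hba : 1 < β * a := by
    rw [ha]
    rw [show β * ((β+1)/(2*β)) = (β+1)/2 by field_simp]
    linarith
  set L : ℕ → ℝ := fun j => Real.exp (β * a * (1 + Real.log j)) * ((1 - a) * (1/(j:ℝ)))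
    with hL
  have hLt : Tendsto L atTop atTop := by
    have h1 : Tendsto (fun x : ℝ => Real.exp (β*a) * (1-a) * x ^ (β*a - 1)) atTop atTop := by
      apply Tendsto.const_mul_atTop (mul_pos (Real.exp_pos _) (by linarith : (0:ℝ) < 1-a))
      exact tendsto_rpow_atTop (by linarith)
    apply Tendsto.congr' _ (h1.comp tendsto_natCast_atTop_atTop)
    filter_upwards [eventually_ge_atTop 1] with j hj
    have hj0 : (0:ℝ) < j := by exact_mod_cast hj
    simp only [Function.comp_apply, hL]
    rw [Real.rpow_sub hj0, Real.rpow_one, Real.rpow_def_of_pos hj0,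
      show β * a * (1 + Real.log j) = β*a + Real.log j * (β*a) by ring, Real.exp_add]
    field_simp
  have hkey : ∀ᶠ j : ℕ in atTop, L j ≤ Ifun N β (moser N j) := by
    filter_upwards [eventually_ge_atTop 1] with j hj
    exact Ifun_moser_lb N hN β hβ j hj
  have hmain : Tendsto (fun j : ℕ => Ifun N β (moser N j)) atTop atTop :=
    tendsto_atTop_mono' atTop hkey hLt
  refine ⟨hmain, ?_⟩
  intro C
  obtain ⟨j, hjC, hj1⟩ := ((hmain.eventually (eventually_gt_atTop C)).and
    (eventually_ge_atTop 1)).exists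
  exact ⟨moser N j, _, memEN_moser N hN j hj1, hjC⟩
end

section
/- Let N ≥ 2 be an integer. Along the infinitesimal Moser sequence w_j, the critical functional J_1 satisfies liminf_{j→∞} J_1(w_j) ≥ e + 1 > 1 = J_1(0), while sup_j J_1(w_j) < ∞. In particular, J_1 fails to be weakly continuous along the infinitesimal Moser sequence (which converges weakly to 0), so the inequality sup_{v ∈ E_N} J_1(v) < ∞ is critical with loss of compactness. -/
open MeasureTheory Real Set Filter intervalIntegral

/-- The improved (log log) Bliss-Moser functional `J_γ`. -/
noncomputable def Jfun (N : ℕ) (γ : ℝ) (v : ℝ → ℝ) : ℝ :=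
  ∫ s in Set.Ioc (0:ℝ) 1,
    Real.exp ((Real.log (Real.exp 1 / s) + γ * Real.log (Real.log (Real.exp 1 / s))) *
      (v s ^ N / s ^ (N - 1)))

namespace MoserAux

noncomputable def phi (s : ℝ) : ℝ :=
  Real.log (Real.exp 1 / s) + 1 * Real.log (Real.log (Real.exp 1 / s))

noncomputable def Fm (N j : ℕ) (s : ℝ) : ℝ :=
  Real.exp (phi s * (moser N j s ^ N / s ^ (N - 1)))

lemma Jfun_moser (N j : ℕ) : Jfun N 1 (moser N j) = ∫ s in Set.Ioc (0:ℝ) 1, Fm N j s := rfl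

noncomputable def Aj (j : ℕ) : ℝ := 1 + Real.log j
noncomputable def Lj (j : ℕ) : ℝ := Aj j + Real.log (Aj j)

variable {N j : ℕ}

lemma jpos (hj : 1 ≤ j) : (0:ℝ) < j := by
  exact_mod_cast Nat.lt_of_lt_of_le Nat.zero_lt_one hj

lemma one_le_Aj (hj : 1 ≤ j) : 1 ≤ Aj j := by
  have : (0:ℝ) ≤ Real.log j := Real.log_nonneg (by exact_mod_cast hj)
  unfold Aj; linarith

lemma Aj_le_Lj (hj : 1 ≤ j) : Aj j ≤ Lj j := by
  have := Real.log_nonneg (one_le_Aj hj)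
  unfold Lj; linarith

lemma one_le_Lj (hj : 1 ≤ j) : 1 ≤ Lj j := le_trans (one_le_Aj hj) (Aj_le_Lj hj)

lemma Lj_pos (hj : 1 ≤ j) : 0 < Lj j := lt_of_lt_of_le one_pos (one_le_Lj hj)

lemma exp_Lj (hj : 1 ≤ j) : Real.exp (Lj j) = Real.exp 1 * j * Aj j := by
  have hA : (0:ℝ) < Aj j := lt_of_lt_of_le one_pos (one_le_Aj hj)
  rw [Lj, Real.exp_add, Real.exp_log hA, Aj, Real.exp_add, Real.exp_log (jpos hj)]

lemma expL_div (hj : 1 ≤ j) : Real.exp (Lj j) / (Lj j * j) = Real.exp 1 * Aj j / Lj j := by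
  rw [exp_Lj hj]
  have h1 := (jpos hj).ne'
  have h2 := (Lj_pos hj).ne'
  field_simp

lemma expL_div_le (hj : 1 ≤ j) : Real.exp (Lj j) / (Lj j * j) ≤ Real.exp 1 := by
  rw [expL_div hj, div_le_iff₀ (Lj_pos hj)]
  have h1 := one_le_Aj hj
  have h2 := Aj_le_Lj hj
  nlinarith [Real.exp_pos 1]

lemma phi_eq {s : ℝ} (hs : 0 < s) : phi s = (1 - Real.log s) + Real.log (1 - Real.log s) := by
  rw [phi, one_mul, Real.log_div (Real.exp_ne_zero 1) hs.ne', Real.log_exp]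

lemma phi_nonneg {s : ℝ} (hs : 0 < s) (hs1 : s ≤ 1) : 0 ≤ phi s := by
  rw [phi_eq hs]
  have h1 : Real.log s ≤ 0 := Real.log_nonpos hs.le hs1
  have h2 : (0:ℝ) ≤ Real.log (1 - Real.log s) := Real.log_nonneg (by linarith)
  linarith

lemma Lj_le_phi (hj : 1 ≤ j) {s : ℝ} (hs : 0 < s) (hsj : s ≤ 1 / (j:ℝ)) :
    Lj j ≤ phi s := by
  have hlog : Real.log s ≤ -Real.log j := by
    have := Real.log_le_log hs hsj
    rwa [one_div, Real.log_inv] at this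
  have hA : (0:ℝ) < Aj j := lt_of_lt_of_le one_pos (one_le_Aj hj)
  have hB : Aj j ≤ 1 - Real.log s := by unfold Aj; linarith
  have := Real.log_le_log hA hB
  rw [phi_eq hs]; unfold Lj; linarith

lemma phi_le_Lj (hj : 1 ≤ j) {s : ℝ} (hs : 1 / (j:ℝ) ≤ s) (hs1 : s ≤ 1) :
    phi s ≤ Lj j := by
  have hjpos := jpos hj
  have hs0 : 0 < s := lt_of_lt_of_le (by positivity) hs
  have hlog : -Real.log j ≤ Real.log s := by
    have := Real.log_le_log (by positivity) hs
    rwa [one_div, Real.log_inv] at this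
  have hB1 : (0:ℝ) < 1 - Real.log s := by
    have := Real.log_nonpos hs0.le hs1; linarith
  have hB : 1 - Real.log s ≤ Aj j := by unfold Aj; linarith
  have := Real.log_le_log hB1 hB
  rw [phi_eq hs0]; unfold Lj Aj at *; linarith

lemma phi_mul_le (hj : 1 ≤ j) {s : ℝ} (hs : 0 < s) (hsj : s ≤ 1 / (j:ℝ)) :
    phi s * ((j:ℝ) * s) ≤ Lj j * ((j:ℝ) * s) + 1 := by
  have hjpos := jpos hj
  have hts : 0 < (j:ℝ) * s := by positivity
  have ht1 : (j:ℝ) * s ≤ 1 := by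
    rw [mul_comm]
    calc s * j ≤ (1/(j:ℝ)) * j := by nlinarith
    _ = 1 := by field_simp
  set u := -Real.log ((j:ℝ)*s) with hu
  have hu0 : 0 ≤ u := by
    have : Real.log ((j:ℝ)*s) ≤ 0 := Real.log_nonpos hts.le ht1
    simp only [hu]; linarith
  have hA0 : (0:ℝ) < Aj j := lt_of_lt_of_le one_pos (one_le_Aj hj)
  have hA1 := one_le_Aj hj
  have hB : 1 - Real.log s = Aj j + u := by
    have hls : Real.log ((j:ℝ)*s) = Real.log j + Real.log s :=
      Real.log_mul hjpos.ne' hs.ne'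
    simp only [hu, hls, Aj]; ring
  have h2 : Real.log (Aj j + u) ≤ Real.log (Aj j) + u := by
    calc Real.log (Aj j + u) ≤ Real.log (Aj j * (1 + u)) :=
          Real.log_le_log (by linarith) (by nlinarith)
      _ = Real.log (Aj j) + Real.log (1 + u) := Real.log_mul hA0.ne' (by linarith)
      _ ≤ Real.log (Aj j) + u := by
          have := Real.log_le_sub_one_of_pos (show (0:ℝ) < 1 + u by linarith)
          linarith
  have hphi : phi s ≤ Lj j + 2*u := by
    rw [phi_eq hs, hB]; unfold Lj; linarith
  have hjs : (j:ℝ) * s = Real.exp (-u) := by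
    simp only [hu, neg_neg]; rw [Real.exp_log hts]
  have huexp : u * ((j:ℝ) * s) ≤ 1/2 := by
    rw [hjs]
    have h1 : u ≤ Real.exp (u - 1) := by have := Real.add_one_le_exp (u-1); linarith
    have h2' : u * Real.exp (-u) ≤ Real.exp (u-1) * Real.exp (-u) :=
      mul_le_mul_of_nonneg_right h1 (Real.exp_pos _).le
    rw [← Real.exp_add] at h2'
    have h3 : u - 1 + -u = -1 := by ring
    rw [h3] at h2'
    have h4 : Real.exp (-1 : ℝ) ≤ 1/2 := by
      rw [Real.exp_neg]
      have h5 : (2:ℝ) ≤ Real.exp 1 := by have := Real.exp_one_gt_d9; linarith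
      rw [inv_le_comm₀ (Real.exp_pos 1) (by norm_num)]
      linarith
    exact le_trans h2' h4
  nlinarith [mul_le_mul_of_nonneg_right hphi hts.le]

lemma moser_pow_inner (hN : 2 ≤ N) (hj : 1 ≤ j) {s : ℝ} (hs : 0 < s) (hsj : s ≤ 1 / (j:ℝ)) :
    moser N j s ^ N / s ^ (N - 1) = (j:ℝ) * s := by
  rw [moser, if_pos hsj, mul_pow]
  have hjnn : (0:ℝ) ≤ j := Nat.cast_nonneg j
  have hN0 : (N:ℝ) ≠ 0 := by positivity
  have h1 : ((j:ℝ) ^ ((1:ℝ)/N)) ^ N = (j:ℝ) := by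
    rw [← Real.rpow_natCast ((j:ℝ) ^ ((1:ℝ)/N)) N, ← Real.rpow_mul hjnn,
      one_div, inv_mul_cancel₀ hN0, Real.rpow_one]
  rw [h1]
  have hs' : s ^ N = s ^ (N-1) * s := by
    conv_lhs => rw [show N = (N-1)+1 by omega]
    rw [pow_succ]
  rw [hs']
  field_simp

lemma moser_pow_outer (hN : 2 ≤ N) (hj : 1 ≤ j) {s : ℝ} (hs : 0 < s) (hsj : ¬ (s ≤ 1 / (j:ℝ))) :
    moser N j s ^ N / s ^ (N - 1) = (((j:ℝ) * s) ^ (N - 1))⁻¹ := by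
  rw [moser, if_neg hsj]
  have hjpos := jpos hj
  have hN0 : (N:ℝ) ≠ 0 := by positivity
  have h1 : ((j:ℝ) ^ (-(((N:ℝ)-1)/N))) ^ N = ((j:ℝ) ^ (N-1 : ℕ))⁻¹ := by
    rw [← Real.rpow_natCast ((j:ℝ) ^ (-(((N:ℝ)-1)/N))) N, ← Real.rpow_mul hjpos.le]
    have h2 : (-(((N:ℝ)-1)/N)) * N = -((N:ℝ)-1) := by field_simp
    rw [h2, Real.rpow_neg hjpos.le]
    congr 1
    rw [show ((N:ℝ)-1) = ((N-1 : ℕ):ℝ) by push_cast [Nat.cast_sub (by omega : 1 ≤ N)]; ring,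
      Real.rpow_natCast]
  rw [h1, mul_pow, div_eq_mul_inv, ← mul_inv]

lemma Fm_inner_lower (hN : 2 ≤ N) (hj : 1 ≤ j) {s : ℝ} (hs : 0 < s) (hsj : s ≤ 1 / (j:ℝ)) :
    Real.exp (Lj j * j * s) ≤ Fm N j s := by
  rw [Fm, moser_pow_inner hN hj hs hsj]
  apply Real.exp_le_exp.2
  have h := mul_le_mul_of_nonneg_right (Lj_le_phi hj hs hsj)
    (by positivity : (0:ℝ) ≤ (j:ℝ) * s)
  calc Lj j * j * s = Lj j * ((j:ℝ) * s) := by ring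
    _ ≤ phi s * ((j:ℝ) * s) := h

lemma Fm_inner_upper (hN : 2 ≤ N) (hj : 1 ≤ j) {s : ℝ} (hs : 0 < s) (hsj : s ≤ 1 / (j:ℝ)) :
    Fm N j s ≤ Real.exp 1 * Real.exp (Lj j * j * s) := by
  rw [Fm, moser_pow_inner hN hj hs hsj, ← Real.exp_add]
  apply Real.exp_le_exp.2
  have := phi_mul_le hj hs hsj
  rw [mul_assoc]
  linarith

lemma Fm_outer_lower (hN : 2 ≤ N) (hj : 1 ≤ j) {s : ℝ} (hs1 : 1 / (j:ℝ) < s) (hs2 : s ≤ 1) :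
    1 ≤ Fm N j s := by
  have hjpos := jpos hj
  have hs0 : 0 < s := lt_trans (by positivity) hs1
  rw [Fm, moser_pow_outer hN hj hs0 (not_le.2 hs1), ← Real.exp_zero]
  apply Real.exp_le_exp.2
  have h1 : (0:ℝ) < (j:ℝ) * s := by positivity
  exact mul_nonneg (phi_nonneg hs0 hs2) (by positivity)

lemma exp_div_le {L t : ℝ} (hL : 1 ≤ L) (ht : 1 < t) :
    Real.exp (L / t) ≤
      Real.exp (3/2 * L) * Real.exp (-(L/2) * t) + (48 * Real.exp L / L) * (t^2)⁻¹
        + Real.exp 1 := by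
  have htpos : (0:ℝ) < t := by linarith
  have hLpos : (0:ℝ) < L := by linarith
  have h2 : (0:ℝ) ≤ (48 * Real.exp L / L) * (t^2)⁻¹ := by positivity
  have h3 : (0:ℝ) ≤ Real.exp 1 := (Real.exp_pos 1).le
  have h1 : (0:ℝ) ≤ Real.exp (3/2 * L) * Real.exp (-(L/2) * t) := by positivity
  rcases le_or_gt t 2 with ht2 | ht2
  · have key : L / t ≤ 3/2 * L + -(L/2) * t := by
      rw [div_le_iff₀ htpos]
      nlinarith [mul_nonneg (mul_nonneg hLpos.le (by linarith : (0:ℝ) ≤ t - 1))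
        (by linarith : (0:ℝ) ≤ 2 - t)]
    have := Real.exp_le_exp.2 key
    rw [Real.exp_add] at this
    linarith
  rcases le_or_gt t L with htL | htL
  · have hcube : L^3 ≤ 48 * Real.exp (L/2) := by
      have h := Real.sum_le_exp_of_nonneg (by positivity : (0:ℝ) ≤ L/2) 4
      simp [Finset.sum_range_succ, Nat.factorial] at h
      nlinarith [h]
    have hexp2 : Real.exp L = Real.exp (L/2) * Real.exp (L/2) := by
      rw [← Real.exp_add]; ring_nf
    have step1 : Real.exp (L / t) ≤ Real.exp (L/2) :=
      Real.exp_le_exp.2 (by rw [div_le_iff₀ htpos]; nlinarith)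
    have step2 : Real.exp (L/2) ≤ 48 * Real.exp L / (L * t^2) := by
      rw [le_div_iff₀ (by positivity)]
      have ht2L : t^2 ≤ L^2 := by nlinarith
      have hL3 : L * t^2 ≤ L^3 := by nlinarith [mul_le_mul_of_nonneg_left ht2L hLpos.le]
      nlinarith [Real.exp_pos (L/2), mul_le_mul_of_nonneg_left hL3 (Real.exp_pos (L/2)).le]
    have heq : 48 * Real.exp L / (L * t^2) = (48 * Real.exp L / L) * (t^2)⁻¹ := by
      field_simp
    linarith [step1.trans (step2.trans_eq heq)]
  · have : Real.exp (L / t) ≤ Real.exp 1 :=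
      Real.exp_le_exp.2 (by rw [div_le_iff₀ htpos]; nlinarith)
    linarith

lemma Fm_le_exp_L_div (hN : 2 ≤ N) (hj : 1 ≤ j) {s : ℝ} (hs1 : 1 / (j:ℝ) < s) (hs2 : s ≤ 1) :
    Fm N j s ≤ Real.exp (Lj j / ((j:ℝ) * s)) := by
  have hjpos := jpos hj
  have hs0 : 0 < s := lt_trans (by positivity) hs1
  have ht : 1 < (j:ℝ) * s := by
    rw [div_lt_iff₀ hjpos] at hs1
    nlinarith
  rw [Fm, moser_pow_outer hN hj hs0 (not_le.2 hs1)]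
  apply Real.exp_le_exp.2
  have hphiL := phi_le_Lj hj hs1.le hs2
  have hphinn := phi_nonneg hs0 hs2
  have htpow : (j:ℝ) * s ≤ ((j:ℝ) * s) ^ (N-1) := le_self_pow₀ ht.le (by omega)
  have hinv : ((((j:ℝ) * s)) ^ (N-1))⁻¹ ≤ ((j:ℝ) * s)⁻¹ :=
    inv_anti₀ (by linarith) htpow
  calc phi s * ((((j:ℝ) * s)) ^ (N-1))⁻¹ ≤ Lj j * ((j:ℝ) * s)⁻¹ :=
        mul_le_mul hphiL hinv (by positivity) (by linarith [one_le_Lj hj])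
    _ = Lj j / ((j:ℝ) * s) := (div_eq_mul_inv _ _).symm

lemma Fm_outer_upper (hN : 2 ≤ N) (hj : 1 ≤ j) {s : ℝ} (hs1 : 1 / (j:ℝ) < s) (hs2 : s ≤ 1) :
    Fm N j s ≤ Real.exp (3/2 * Lj j) * Real.exp (-(Lj j * j / 2) * s)
      + (48 * Real.exp (Lj j) / (Lj j * (j:ℝ)^2)) * (s^2)⁻¹ + Real.exp 1 := by
  have hjpos := jpos hj
  have hs0 : 0 < s := lt_trans (by positivity) hs1
  have ht : 1 < (j:ℝ) * s := by
    rw [div_lt_iff₀ hjpos] at hs1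
    nlinarith
  have key := (Fm_le_exp_L_div hN hj hs1 hs2).trans (exp_div_le (one_le_Lj hj) ht)
  have e1 : -(Lj j / 2) * ((j:ℝ) * s) = -(Lj j * j / 2) * s := by ring
  have e2 : (48 * Real.exp (Lj j) / Lj j) * ((((j:ℝ) * s))^2)⁻¹
      = (48 * Real.exp (Lj j) / (Lj j * (j:ℝ)^2)) * (s^2)⁻¹ := by
    have h1 := (Lj_pos hj).ne'
    field_simp
  rw [e1, e2] at key
  exact key

lemma Fm_measurable : Measurable (Fm N j) := by
  have hm : Measurable (moser N j) :=
    Measurable.ite (measurableSet_le measurable_id measurable_const)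
      (measurable_const.mul measurable_id) measurable_const
  have h1 : Measurable fun s : ℝ => Real.log (Real.exp 1 / s) :=
    Real.measurable_log.comp (measurable_const.div measurable_id)
  exact Real.measurable_exp.comp
    (((h1.add ((Real.measurable_log.comp h1).const_mul 1)).mul
      ((hm.pow_const N).div (measurable_id.pow_const (N-1)))))

lemma Fm_bounded (hN : 2 ≤ N) (hj : 1 ≤ j) {s : ℝ} (hs : s ∈ Set.Ioc (0:ℝ) 1) :
    Fm N j s ≤ Real.exp (Lj j + 1) := by
  obtain ⟨hs0, hs1⟩ := hs
  have hjpos := jpos hj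
  have hL := one_le_Lj hj
  by_cases hsj : s ≤ 1/(j:ℝ)
  · have h := Fm_inner_upper hN hj hs0 hsj
    have hjs : (j:ℝ) * s ≤ 1 := by
      rw [le_div_iff₀ hjpos] at hsj
      nlinarith
    calc Fm N j s ≤ Real.exp 1 * Real.exp (Lj j * j * s) := h
      _ = Real.exp (1 + Lj j * j * s) := (Real.exp_add _ _).symm
      _ ≤ Real.exp (Lj j + 1) := Real.exp_le_exp.2 (by nlinarith)
  · have h := Fm_le_exp_L_div hN hj (not_le.1 hsj) hs1
    have ht1 : 1 ≤ (j:ℝ) * s := by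
      have := not_le.1 hsj
      rw [div_lt_iff₀ hjpos] at this
      nlinarith
    calc Fm N j s ≤ Real.exp (Lj j / ((j:ℝ)*s)) := h
      _ ≤ Real.exp (Lj j + 1) := Real.exp_le_exp.2 (by
          have := div_le_self (by linarith : (0:ℝ) ≤ Lj j) ht1
          linarith)

lemma Fm_integrableOn (hN : 2 ≤ N) (hj : 1 ≤ j) :
    IntegrableOn (Fm N j) (Set.Ioc (0:ℝ) 1) := by
  apply Measure.integrableOn_of_bounded (M := Real.exp (Lj j + 1)) measure_Ioc_lt_top.ne
    Fm_measurable.aestronglyMeasurable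
  rw [ae_restrict_iff' measurableSet_Ioc]
  refine ae_of_all _ fun s hs => ?_
  rw [Real.norm_eq_abs, abs_of_pos (show (0:ℝ) < Fm N j s from Real.exp_pos _)]
  exact Fm_bounded hN hj hs

lemma integral_exp_K (a b K : ℝ) (hK : K ≠ 0) :
    ∫ x in a..b, Real.exp (K * x) = (Real.exp (K*b) - Real.exp (K*a)) / K := by
  rw [integral_comp_mul_left (fun x => Real.exp x) hK, integral_exp, smul_eq_mul]
  field_simp

lemma setIntegral_exp_K {a b : ℝ} (K : ℝ) (hab : a ≤ b) (hK : K ≠ 0) :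
    ∫ x in Set.Ioc a b, Real.exp (K * x) = (Real.exp (K*b) - Real.exp (K*a)) / K := by
  rw [← integral_of_le hab, integral_exp_K a b K hK]

lemma setIntegral_inv_sq {c : ℝ} (hc : 0 < c) (hc1 : c ≤ 1) :
    ∫ s in Set.Ioc c 1, (s^2)⁻¹ = c⁻¹ - 1 := by
  rw [← integral_of_le hc1]
  have h : ∫ x in c..1, (x^2)⁻¹ = ∫ x in c..1, x^(-2:ℤ) := by
    apply intervalIntegral.integral_congr
    intro x _
    show (x ^ 2)⁻¹ = x ^ (-2:ℤ)
    rw [zpow_neg, zpow_two, pow_two]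
  rw [h, integral_zpow]
  · norm_num
    ring
  · right
    refine ⟨by norm_num, ?_⟩
    rw [Set.uIcc_of_le hc1]
    intro hmem
    exact absurd (Set.mem_Icc.1 hmem).1 (by linarith)

lemma setIntegral_const_Ioc {c : ℝ} (r : ℝ) (hc1 : c ≤ 1) :
    ∫ _ in Set.Ioc c 1, r = (1 - c) * r := by
  rw [setIntegral_const, Real.volume_real_Ioc_of_le hc1,
    smul_eq_mul]

lemma Jfun_split (hN : 2 ≤ N) (hj : 1 ≤ j) :
    Jfun N 1 (moser N j) = (∫ s in Set.Ioc (0:ℝ) (1/(j:ℝ)), Fm N j s)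
      + ∫ s in Set.Ioc (1/(j:ℝ)) 1, Fm N j s := by
  have hjpos := jpos hj
  have hc0 : (0:ℝ) < 1/(j:ℝ) := by positivity
  have hc1 : 1/(j:ℝ) ≤ 1 := by
    rw [div_le_one hjpos]; exact_mod_cast hj
  rw [Jfun_moser, ← Set.Ioc_union_Ioc_eq_Ioc hc0.le hc1,
    setIntegral_union (Set.Ioc_disjoint_Ioc_of_le le_rfl) measurableSet_Ioc
      ((Fm_integrableOn hN hj).mono_set (Set.Ioc_subset_Ioc_right hc1))
      ((Fm_integrableOn hN hj).mono_set (Set.Ioc_subset_Ioc_left hc0.le))]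

lemma inner_lower (hN : 2 ≤ N) (hj : 1 ≤ j) :
    (Real.exp (Lj j) - 1)/(Lj j * j) ≤ ∫ s in Set.Ioc (0:ℝ) (1/(j:ℝ)), Fm N j s := by
  have hjpos := jpos hj
  have hc0 : (0:ℝ) < 1/(j:ℝ) := by positivity
  have hc1 : 1/(j:ℝ) ≤ 1 := by rw [div_le_one hjpos]; exact_mod_cast hj
  have hLjj : (0:ℝ) < Lj j * j := mul_pos (Lj_pos hj) hjpos
  have hcomp : ∫ s in Set.Ioc (0:ℝ) (1/(j:ℝ)), Real.exp ((Lj j * j) * s)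
      = (Real.exp (Lj j) - 1)/(Lj j * j) := by
    rw [setIntegral_exp_K _ hc0.le hLjj.ne']
    have h1 : Lj j * j * (1/(j:ℝ)) = Lj j := by field_simp
    rw [h1, mul_zero, Real.exp_zero]
  rw [← hcomp]
  apply setIntegral_mono_on
  · exact (Real.continuous_exp.comp (continuous_const.mul continuous_id)).integrableOn_Ioc
  · exact (Fm_integrableOn hN hj).mono_set (Set.Ioc_subset_Ioc_right hc1)
  · exact measurableSet_Ioc
  · intro s hs
    have := Fm_inner_lower hN hj hs.1 hs.2
    rwa [show Lj j * j * s = (Lj j * j) * s from rfl] at this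

lemma outer_lower (hN : 2 ≤ N) (hj : 1 ≤ j) :
    1 - 1/(j:ℝ) ≤ ∫ s in Set.Ioc (1/(j:ℝ)) 1, Fm N j s := by
  have hjpos := jpos hj
  have hc0 : (0:ℝ) < 1/(j:ℝ) := by positivity
  have hc1 : 1/(j:ℝ) ≤ 1 := by rw [div_le_one hjpos]; exact_mod_cast hj
  calc 1 - 1/(j:ℝ) = ∫ _ in Set.Ioc (1/(j:ℝ)) 1, (1:ℝ) := by
        rw [setIntegral_const_Ioc _ hc1]; ring
    _ ≤ ∫ s in Set.Ioc (1/(j:ℝ)) 1, Fm N j s := by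
        apply setIntegral_mono_on
        · exact integrableOn_const measure_Ioc_lt_top.ne
        · exact (Fm_integrableOn hN hj).mono_set (Set.Ioc_subset_Ioc_left hc0.le)
        · exact measurableSet_Ioc
        · intro s hs; exact Fm_outer_lower hN hj hs.1 hs.2

lemma inner_upper (hN : 2 ≤ N) (hj : 1 ≤ j) :
    ∫ s in Set.Ioc (0:ℝ) (1/(j:ℝ)), Fm N j s ≤ Real.exp 1 * Real.exp 1 := by
  have hjpos := jpos hj
  have hc0 : (0:ℝ) < 1/(j:ℝ) := by positivity
  have hc1 : 1/(j:ℝ) ≤ 1 := by rw [div_le_one hjpos]; exact_mod_cast hj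
  have hLjj : (0:ℝ) < Lj j * j := mul_pos (Lj_pos hj) hjpos
  have step1 : ∫ s in Set.Ioc (0:ℝ) (1/(j:ℝ)), Fm N j s
      ≤ ∫ s in Set.Ioc (0:ℝ) (1/(j:ℝ)), Real.exp 1 * Real.exp ((Lj j * j) * s) := by
    apply setIntegral_mono_on
    · exact (Fm_integrableOn hN hj).mono_set (Set.Ioc_subset_Ioc_right hc1)
    · exact (continuous_const.mul
        (Real.continuous_exp.comp (continuous_const.mul continuous_id))).integrableOn_Ioc
    · exact measurableSet_Ioc
    · intro s hs
      have := Fm_inner_upper hN hj hs.1 hs.2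
      rwa [show Lj j * j * s = (Lj j * j) * s from rfl] at this
  have step2 : ∫ s in Set.Ioc (0:ℝ) (1/(j:ℝ)), Real.exp 1 * Real.exp ((Lj j * j) * s)
      = Real.exp 1 * ((Real.exp (Lj j) - 1)/(Lj j * j)) := by
    rw [MeasureTheory.integral_const_mul, setIntegral_exp_K _ hc0.le hLjj.ne']
    have h1 : Lj j * j * (1/(j:ℝ)) = Lj j := by field_simp
    rw [h1, mul_zero, Real.exp_zero]
  have step3 : (Real.exp (Lj j) - 1)/(Lj j * j) ≤ Real.exp 1 := by
    have h1 : (Real.exp (Lj j) - 1)/(Lj j * j) ≤ Real.exp (Lj j)/(Lj j * j) := by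
      apply div_le_div_of_nonneg_right ?_ hLjj.le
      linarith
    exact h1.trans (expL_div_le hj)
  calc ∫ s in Set.Ioc (0:ℝ) (1/(j:ℝ)), Fm N j s
      ≤ Real.exp 1 * ((Real.exp (Lj j) - 1)/(Lj j * j)) := step1.trans_eq step2
    _ ≤ Real.exp 1 * Real.exp 1 :=
        mul_le_mul_of_nonneg_left step3 (Real.exp_pos 1).le

lemma outer_upper (hN : 2 ≤ N) (hj : 1 ≤ j) :
    ∫ s in Set.Ioc (1/(j:ℝ)) 1, Fm N j s ≤ 51 * Real.exp 1 := by
  have hjpos := jpos hj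
  have hc0 : (0:ℝ) < 1/(j:ℝ) := by positivity
  have hc1 : 1/(j:ℝ) ≤ 1 := by rw [div_le_one hjpos]; exact_mod_cast hj
  have hL := one_le_Lj hj
  have hLpos := Lj_pos hj
  have hLjj : (0:ℝ) < Lj j * j := mul_pos hLpos hjpos
  set K : ℝ := -(Lj j * j / 2) with hK
  have hKneg : K < 0 := by rw [hK]; linarith
  set K2 : ℝ := 48 * Real.exp (Lj j) / (Lj j * (j:ℝ)^2) with hK2
  have hK2nn : 0 ≤ K2 := by rw [hK2]; positivity
  have hg1 : IntegrableOn (fun s : ℝ => Real.exp (3/2 * Lj j) * Real.exp (K * s))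
      (Set.Ioc (1/(j:ℝ)) 1) :=
    (continuous_const.mul
      (Real.continuous_exp.comp (continuous_const.mul continuous_id))).integrableOn_Ioc
  have hg2 : IntegrableOn (fun s : ℝ => K2 * (s^2)⁻¹) (Set.Ioc (1/(j:ℝ)) 1) := by
    have hcont : ContinuousOn (fun s : ℝ => K2 * (s^2)⁻¹) (Set.Icc (1/(j:ℝ)) 1) :=
      continuousOn_const.mul ((continuousOn_id.pow 2).inv₀
        (fun x hx => pow_ne_zero 2 (ne_of_gt (lt_of_lt_of_le hc0 hx.1))))
    exact (hcont.integrableOn_Icc).mono_set Set.Ioc_subset_Icc_self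
  have hg3 : IntegrableOn (fun _ : ℝ => Real.exp 1) (Set.Ioc (1/(j:ℝ)) 1) :=
    integrableOn_const measure_Ioc_lt_top.ne
  have mono : ∫ s in Set.Ioc (1/(j:ℝ)) 1, Fm N j s
      ≤ ∫ s in Set.Ioc (1/(j:ℝ)) 1,
          (Real.exp (3/2 * Lj j) * Real.exp (K * s) + K2 * (s^2)⁻¹ + Real.exp 1) := by
    apply setIntegral_mono_on
    · exact (Fm_integrableOn hN hj).mono_set (Set.Ioc_subset_Ioc_left hc0.le)
    · exact (hg1.add hg2).add hg3

    · exact measurableSet_Ioc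
    · intro s hs
      have h := Fm_outer_upper hN hj hs.1 hs.2
      rw [← hK, ← hK2] at h
      exact h
  have hsplit : ∫ s in Set.Ioc (1/(j:ℝ)) 1,
      (Real.exp (3/2 * Lj j) * Real.exp (K * s) + K2 * (s^2)⁻¹ + Real.exp 1)
      = (∫ s in Set.Ioc (1/(j:ℝ)) 1, Real.exp (3/2 * Lj j) * Real.exp (K * s))
        + (∫ s in Set.Ioc (1/(j:ℝ)) 1, K2 * (s^2)⁻¹)
        + (∫ _ in Set.Ioc (1/(j:ℝ)) 1, Real.exp 1) := by
    have h12 : IntegrableOn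
        (fun s : ℝ => Real.exp (3/2 * Lj j) * Real.exp (K * s) + K2 * (s^2)⁻¹)
        (Set.Ioc (1/(j:ℝ)) 1) := hg1.add hg2
    rw [integral_add h12 hg3, integral_add hg1 hg2]
  have hT1 : (∫ s in Set.Ioc (1/(j:ℝ)) 1, Real.exp (3/2 * Lj j) * Real.exp (K * s))
      ≤ 2 * Real.exp 1 := by
    rw [MeasureTheory.integral_const_mul, setIntegral_exp_K K hc1 hKneg.ne]
    have hKc : K * (1/(j:ℝ)) = -(Lj j/2) := by rw [hK]; field_simp
    rw [mul_one, hKc]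
    have heq : (Real.exp K - Real.exp (-(Lj j/2)))/K
        = (Real.exp (-(Lj j/2)) - Real.exp K) * (2/(Lj j * j)) := by
      rw [hK]; field_simp; ring
    rw [heq]
    have hb1 : (Real.exp (-(Lj j/2)) - Real.exp K) * (2/(Lj j * j))
        ≤ Real.exp (-(Lj j/2)) * (2/(Lj j * j)) :=
      mul_le_mul_of_nonneg_right (by linarith [Real.exp_pos K]) (by positivity)
    have hprod : Real.exp (3/2 * Lj j) * Real.exp (-(Lj j/2)) = Real.exp (Lj j) := by
      rw [← Real.exp_add]; ring_nf
    have hb2 : Real.exp (3/2 * Lj j) * (Real.exp (-(Lj j/2)) * (2/(Lj j * j)))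
        = 2 * (Real.exp (Lj j)/(Lj j * j)) := by
      calc Real.exp (3/2 * Lj j) * (Real.exp (-(Lj j/2)) * (2/(Lj j * j)))
          = (Real.exp (3/2 * Lj j) * Real.exp (-(Lj j/2))) * (2/(Lj j * j)) := by ring
        _ = Real.exp (Lj j) * (2/(Lj j * j)) := by rw [hprod]
        _ = 2 * (Real.exp (Lj j)/(Lj j * j)) := by ring
    have := expL_div_le hj
    calc Real.exp (3/2 * Lj j) * ((Real.exp (-(Lj j/2)) - Real.exp K) * (2/(Lj j * j)))
        ≤ Real.exp (3/2 * Lj j) * (Real.exp (-(Lj j/2)) * (2/(Lj j * j))) :=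
          mul_le_mul_of_nonneg_left hb1 (Real.exp_pos _).le
      _ = 2 * (Real.exp (Lj j)/(Lj j * j)) := hb2
      _ ≤ 2 * Real.exp 1 := by linarith
  have hT2 : (∫ s in Set.Ioc (1/(j:ℝ)) 1, K2 * (s^2)⁻¹) ≤ 48 * Real.exp 1 := by
    rw [MeasureTheory.integral_const_mul, setIntegral_inv_sq hc0 hc1]
    have hcinv : (1/(j:ℝ))⁻¹ = (j:ℝ) := by rw [one_div, inv_inv]
    rw [hcinv]
    have h1 : K2 * ((j:ℝ) - 1) ≤ K2 * j := mul_le_mul_of_nonneg_left (by linarith) hK2nn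
    have h2 : K2 * (j:ℝ) = 48 * (Real.exp (Lj j)/(Lj j * j)) := by
      rw [hK2]; field_simp
    have := expL_div_le hj
    calc K2 * ((j:ℝ) - 1) ≤ 48 * (Real.exp (Lj j)/(Lj j * j)) := h1.trans_eq h2
      _ ≤ 48 * Real.exp 1 := by linarith
  have hT3 : (∫ _ in Set.Ioc (1/(j:ℝ)) 1, Real.exp 1) ≤ Real.exp 1 := by
    rw [setIntegral_const_Ioc _ hc1]
    nlinarith [Real.exp_pos 1]
  calc ∫ s in Set.Ioc (1/(j:ℝ)) 1, Fm N j s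
      ≤ _ := mono.trans_eq hsplit
    _ ≤ 51 * Real.exp 1 := by linarith

lemma Jfun_zero (hN : 2 ≤ N) : Jfun N 1 (fun _ => 0) = 1 := by
  calc Jfun N 1 (fun _ => 0) = ∫ _ in Set.Ioc (0:ℝ) 1, (1:ℝ) := by
        unfold Jfun
        congr 1
        funext s
        rw [zero_pow (by omega : N ≠ 0), zero_div, mul_zero, Real.exp_zero]
    _ = 1 := by rw [setIntegral_const_Ioc _ (by norm_num : (0:ℝ) ≤ 1)]; ring

lemma Jfun_moser_zero (hN : 2 ≤ N) : Jfun N 1 (moser N 0) = 1 := by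
  rw [Jfun_moser]
  have heq : Set.EqOn (Fm N 0) (fun _ => (1:ℝ)) (Set.Ioc (0:ℝ) 1) := by
    intro s hs
    have h0 : ¬ (s ≤ 1/((0:ℕ):ℝ)) := by
      push_cast
      rw [div_zero]
      exact not_le.2 hs.1
    have h2 : (2:ℝ) ≤ (N:ℝ) := by exact_mod_cast hN
    rw [Fm, moser, if_neg h0, Nat.cast_zero,
      Real.zero_rpow (neg_ne_zero.2 (div_ne_zero (by linarith) (by linarith))),
      zero_pow (by omega : N ≠ 0), zero_div, mul_zero, Real.exp_zero]
  rw [setIntegral_congr_fun measurableSet_Ioc heq,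
    setIntegral_const_Ioc _ (by norm_num : (0:ℝ) ≤ 1)]
  ring

noncomputable def low (j : ℕ) : ℝ :=
  (Real.exp (Lj j) - 1)/(Lj j * j) + (1 - 1/(j:ℝ))

lemma low_le (hN : 2 ≤ N) (hj : 1 ≤ j) : low j ≤ Jfun N 1 (moser N j) := by
  rw [Jfun_split hN hj]
  exact add_le_add (inner_lower hN hj) (outer_lower hN hj)

lemma low_tendsto : Tendsto low atTop (nhds (Real.exp 1 + 1)) := by
  have hA : Tendsto (fun j : ℕ => Aj j) atTop atTop := by
    unfold Aj
    exact tendsto_atTop_add_const_left _ 1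
      (Real.tendsto_log_atTop.comp tendsto_natCast_atTop_atTop)
  have hratio : Tendsto (fun x : ℝ => x / (x + Real.log x)) atTop (nhds 1) := by
    have h0 : Tendsto (fun x : ℝ => Real.log x / x) atTop (nhds 0) :=
      Real.isLittleO_log_id_atTop.tendsto_div_nhds_zero
    have h1 : Tendsto (fun x : ℝ => 1 + Real.log x / x) atTop (nhds 1) := by
      have := (tendsto_const_nhds (x := (1:ℝ)) (f := (atTop : Filter ℝ))).add h0
      simpa using this
    have h2 : Tendsto (fun x : ℝ => (1 + Real.log x / x)⁻¹) atTop (nhds 1) := by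
      have := h1.inv₀ one_ne_zero
      simpa using this
    apply h2.congr'
    filter_upwards [eventually_gt_atTop (0:ℝ)] with x hx
    have hxe : 1 + Real.log x / x = (x + Real.log x)/x := by field_simp
    rw [hxe, inv_div]
  have hAL : Tendsto (fun j : ℕ => Aj j / Lj j) atTop (nhds 1) := by
    have := hratio.comp hA
    apply this.congr
    intro j
    simp [Function.comp, Lj]
  have h2 : Tendsto (fun j : ℕ => 1/(Lj j * j)) atTop (nhds 0) := by
    apply squeeze_zero' ?_ ?_ tendsto_one_div_atTop_nhds_zero_nat
    · filter_upwards [eventually_ge_atTop 1] with j hj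
      have := Lj_pos hj
      have := jpos hj
      positivity
    · filter_upwards [eventually_ge_atTop 1] with j hj
      apply one_div_le_one_div_of_le (jpos hj)
      nlinarith [one_le_Lj hj, jpos hj]
  have h3 : Tendsto (fun j : ℕ => 1 - 1/(j:ℝ)) atTop (nhds 1) := by
    have := (tendsto_const_nhds (x := (1:ℝ)) (f := (atTop : Filter ℕ))).sub
      tendsto_one_div_atTop_nhds_zero_nat
    simpa using this
  have hg : Tendsto (fun j : ℕ => Real.exp 1 * (Aj j / Lj j) - 1/(Lj j * j) + (1 - 1/(j:ℝ)))
      atTop (nhds (Real.exp 1 + 1)) := by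
    have := ((tendsto_const_nhds (x := Real.exp 1) (f := (atTop : Filter ℕ))).mul hAL).sub
      h2 |>.add h3
    simpa using this
  apply hg.congr'
  filter_upwards [eventually_ge_atTop 1] with j hj
  have hLpos := Lj_pos hj
  have hjp := jpos hj
  unfold low
  rw [exp_Lj hj]
  field_simp

end MoserAux

open MoserAux in
/-- along the infinitesimal Moser sequence, the critical functional `J_1`
satisfies `liminf J_1(w_j) ≥ e + 1 > 1 = J_1(0)` while `sup_j J_1(w_j) < ∞`; in particular
`J_1` fails to be continuous along the (weakly null) infinitesimal Moser sequence. -/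
theorem Jfun_one_moser_noncompact (N : ℕ) (hN : 2 ≤ N) :
    Real.exp 1 + 1 ≤ Filter.liminf (fun j : ℕ => Jfun N 1 (moser N j)) Filter.atTop ∧
    (∃ C : ℝ, ∀ j : ℕ, Jfun N 1 (moser N j) ≤ C) ∧
    Jfun N 1 (fun _ => 0) = 1 ∧
    (1 : ℝ) < Real.exp 1 + 1 ∧
    ¬ Filter.Tendsto (fun j : ℕ => Jfun N 1 (moser N j)) Filter.atTop
        (nhds (Jfun N 1 (fun _ => 0))) := by
  have hzero : Jfun N 1 (fun _ => 0) = 1 := Jfun_zero hN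
  have hub : ∀ j : ℕ, Jfun N 1 (moser N j)
      ≤ Real.exp 1 * Real.exp 1 + 51 * Real.exp 1 + 1 := by
    intro j
    rcases Nat.eq_zero_or_pos j with h0 | h1
    · subst h0
      rw [Jfun_moser_zero hN]
      nlinarith [Real.exp_pos 1]
    · rw [Jfun_split hN h1]
      have hi := inner_upper hN h1
      have ho := outer_upper (j := j) hN h1
      linarith
  have hliminf : Real.exp 1 + 1
      ≤ liminf (fun j : ℕ => Jfun N 1 (moser N j)) atTop := by
    rw [← low_tendsto.liminf_eq]
    apply liminf_le_liminf
    · filter_upwards [eventually_ge_atTop 1] with j hj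
      exact low_le hN hj
    · exact low_tendsto.isBoundedUnder_ge
    · exact Filter.IsBoundedUnder.isCoboundedUnder_ge
        ⟨Real.exp 1 * Real.exp 1 + 51 * Real.exp 1 + 1,
          eventually_map.2 (Eventually.of_forall hub)⟩
  refine ⟨hliminf, ⟨_, hub⟩, hzero, by nlinarith [Real.exp_pos 1], ?_⟩
  intro hT
  rw [hzero] at hT
  have heq := hT.liminf_eq
  rw [heq] at hliminf
  nlinarith [Real.exp_pos 1]
end

section
/- Let N ≥ 2 be an integer and γ < 1. Then along the infinitesimal Moser sequence w_j one has J_γ(w_j) = ∫₀¹ exp( ( log(e/s) + γ·log log(e/s) ) · w_j(s)^N / s^{N−1} ) ds → 1 = J_γ(0) as j → ∞. -/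
open MeasureTheory Real Set Filter

namespace JM

noncomputable def ell (j : ℕ) : ℝ := 1 + Real.log j

noncomputable def fj (N : ℕ) (γ : ℝ) (j : ℕ) (s : ℝ) : ℝ :=
  Real.exp ((Real.log (Real.exp 1 / s) + γ * Real.log (Real.log (Real.exp 1 / s))) *
      (moser N j s ^ N / s ^ (N - 1)))

lemma Jfun_moser_eq (N : ℕ) (γ : ℝ) (j : ℕ) :
    Jfun N γ (moser N j) = ∫ s in Set.Ioc (0:ℝ) 1, fj N γ j s := rfl

lemma fj_pos (N : ℕ) (γ : ℝ) (j : ℕ) (s : ℝ) : 0 < fj N γ j s := Real.exp_pos _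

lemma logE_eq {s : ℝ} (hs : 0 < s) : Real.log (Real.exp 1 / s) = 1 - Real.log s := by
  rw [Real.log_div (Real.exp_ne_zero 1) hs.ne', Real.log_exp]

lemma one_le_logE {s : ℝ} (hs : 0 < s) (hs1 : s ≤ 1) : 1 ≤ Real.log (Real.exp 1 / s) := by
  rw [logE_eq hs]
  have := Real.log_nonpos hs.le hs1
  linarith

lemma loglog_nonneg {s : ℝ} (hs : 0 < s) (hs1 : s ≤ 1) :
    0 ≤ Real.log (Real.log (Real.exp 1 / s)) :=
  Real.log_nonneg (one_le_logE hs hs1)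

lemma loglog_le_logE {s : ℝ} (hs : 0 < s) (hs1 : s ≤ 1) :
    Real.log (Real.log (Real.exp 1 / s)) ≤ Real.log (Real.exp 1 / s) := by
  have h1 := one_le_logE hs hs1
  have := Real.log_le_sub_one_of_pos (lt_of_lt_of_le one_pos h1)
  linarith

/-- the coefficient `g s` -/
noncomputable def gco (γ : ℝ) (s : ℝ) : ℝ :=
  Real.log (Real.exp 1 / s) + γ * Real.log (Real.log (Real.exp 1 / s))

lemma gco_le {γ : ℝ} {s : ℝ} (hs : 0 < s) (hs1 : s ≤ 1) :
    gco γ s ≤ (1 + max γ 0) * Real.log (Real.exp 1 / s) := by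
  have h1 := loglog_nonneg hs hs1
  have h2 := loglog_le_logE hs hs1
  have h3 : γ * Real.log (Real.log (Real.exp 1 / s)) ≤ max γ 0 * Real.log (Real.exp 1 / s) := by
    calc γ * Real.log (Real.log (Real.exp 1 / s)) ≤ max γ 0 * Real.log (Real.log (Real.exp 1 / s)) :=
          mul_le_mul_of_nonneg_right (le_max_left _ _) h1
    _ ≤ max γ 0 * Real.log (Real.exp 1 / s) :=
          mul_le_mul_of_nonneg_left h2 (le_max_right _ _)
  unfold gco; nlinarith [one_le_logE hs hs1]

lemma abs_gco_le {γ : ℝ} {s : ℝ} (hs : 0 < s) (hs1 : s ≤ 1) :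
    |gco γ s| ≤ (1 + |γ|) * Real.log (Real.exp 1 / s) := by
  have h1 := loglog_nonneg hs hs1
  have h2 := loglog_le_logE hs hs1
  have h0 := one_le_logE hs hs1
  have : |γ * Real.log (Real.log (Real.exp 1 / s))| ≤ |γ| * Real.log (Real.exp 1 / s) := by
    rw [abs_mul, abs_of_nonneg h1]
    exact mul_le_mul_of_nonneg_left h2 (abs_nonneg _)
  unfold gco
  have := abs_add_le (Real.log (Real.exp 1 / s)) (γ * Real.log (Real.log (Real.exp 1 / s)))
  rw [abs_of_nonneg (by linarith : (0:ℝ) ≤ Real.log (Real.exp 1 / s))] at this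
  linarith

lemma moser_eval_left {N j : ℕ} {s : ℝ} (h : s ≤ 1 / (j:ℝ)) :
    moser N j s = (j : ℝ) ^ ((1:ℝ) / N) * s := if_pos h

lemma moser_eval_right {N j : ℕ} {s : ℝ} (h : 1 / (j:ℝ) < s) :
    moser N j s = (j : ℝ) ^ (-(((N:ℝ) - 1) / N)) := if_neg (not_le.2 h)

lemma quot_left {N j : ℕ} (hN : 2 ≤ N) (hj : 1 ≤ j) {s : ℝ} (hs : 0 < s)
    (h : s ≤ 1 / (j:ℝ)) : moser N j s ^ N / s ^ (N - 1) = (j:ℝ) * s := by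
  have hNr : (N:ℝ) ≠ 0 := Nat.cast_ne_zero.2 (by omega)
  have hjr : (0:ℝ) ≤ j := by positivity
  rw [moser_eval_left h, mul_pow, ← Real.rpow_natCast ((j:ℝ) ^ ((1:ℝ)/N)) N,
    ← Real.rpow_mul hjr]
  have : (1:ℝ) / N * N = 1 := by field_simp
  rw [this, Real.rpow_one]
  have hN1 : N - 1 + 1 = N := by omega
  have hsN : s ^ N = s ^ (N - 1) * s := by rw [← pow_succ, hN1]
  rw [hsN]
  have : s ^ (N-1) ≠ 0 := pow_ne_zero _ hs.ne'
  field_simp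

lemma quot_right {N j : ℕ} (hN : 2 ≤ N) (hj : 1 ≤ j) {s : ℝ} (hs : 0 < s)
    (h : 1 / (j:ℝ) < s) :
    moser N j s ^ N / s ^ (N - 1) = 1 / ((j:ℝ) * s) ^ (N - 1) := by
  have hjr : (0:ℝ) ≤ j := by positivity
  rw [moser_eval_right h, ← Real.rpow_natCast ((j:ℝ) ^ (-(((N:ℝ) - 1) / N))) N,
    ← Real.rpow_mul hjr]
  have hNr : (N:ℝ) ≠ 0 := Nat.cast_ne_zero.2 (by omega)
  have h1 : (-(((N:ℝ) - 1) / N)) * N = -((N:ℝ) - 1) := by field_simp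
  have h2 : ((N:ℝ) - 1) = ((N - 1 : ℕ) : ℝ) := by
    have : (1:ℕ) ≤ N := by omega
    push_cast [Nat.cast_sub this]
    ring
  rw [h1, h2, Real.rpow_neg hjr, Real.rpow_natCast, mul_pow]
  field_simp


lemma moser_measurable (N j : ℕ) : Measurable (moser N j) := by
  unfold moser
  exact Measurable.ite (measurableSet_le measurable_id measurable_const)
    (measurable_const.mul measurable_id) measurable_const

lemma fj_measurable (N : ℕ) (γ : ℝ) (j : ℕ) : Measurable (fj N γ j) := by
  unfold fj
  apply Real.measurable_exp.comp
  apply Measurable.mul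
  · apply Measurable.add
    · exact Real.measurable_log.comp (measurable_const.div measurable_id)
    · exact measurable_const.mul
        (Real.measurable_log.comp (Real.measurable_log.comp (measurable_const.div measurable_id)))
  · exact (((moser_measurable N j).pow measurable_const).div (measurable_id.pow measurable_const))

/-- first-branch exponent value -/
lemma exponent_left {N j : ℕ} (hN : 2 ≤ N) (hj : 1 ≤ j) (γ : ℝ) {s : ℝ} (hs : 0 < s)
    (h : s ≤ 1 / (j:ℝ)) : fj N γ j s = Real.exp (gco γ s * ((j:ℝ) * s)) := by
  unfold fj; rw [quot_left hN hj hs h]; rfl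

lemma exponent_right {N j : ℕ} (hN : 2 ≤ N) (hj : 1 ≤ j) (γ : ℝ) {s : ℝ} (hs : 0 < s)
    (h : 1 / (j:ℝ) < s) :
    fj N γ j s = Real.exp (gco γ s * (1 / ((j:ℝ) * s) ^ (N - 1))) := by
  unfold fj; rw [quot_right hN hj hs h]; rfl

lemma t_log_le {t : ℝ} (ht : 0 < t) : t * Real.log (1 / t) ≤ 1 / Real.exp 1 := by
  have h1 : Real.log (1 / (Real.exp 1 * t)) ≤ 1 / (Real.exp 1 * t) - 1 :=
    Real.log_le_sub_one_of_pos (by positivity)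
  have h2 : Real.log (1 / t) = Real.log (1 / (Real.exp 1 * t)) + 1 := by
    rw [one_div, one_div, Real.log_inv, Real.log_inv, Real.log_mul (Real.exp_ne_zero 1) ht.ne',
      Real.log_exp]
    ring
  have hE : 0 < Real.exp 1 := Real.exp_pos 1
  rw [h2]
  have := mul_le_mul_of_nonneg_left h1 ht.le
  have h3 : t * (1 / (Real.exp 1 * t) - 1) = 1 / Real.exp 1 - t := by field_simp
  nlinarith

/-- global exponent bound, giving integrability -/
lemma fj_integrableOn (N : ℕ) (hN : 2 ≤ N) (γ : ℝ) (j : ℕ) (hj : 1 ≤ j) :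
    IntegrableOn (fj N γ j) (Set.Ioc (0:ℝ) 1) := by
  have hbdd : ∀ s ∈ Set.Ioc (0:ℝ) 1, ‖fj N γ j s‖ ≤ Real.exp ((1 + |γ|) * (j + 1)) := by
    intro s hs
    obtain ⟨hs0, hs1⟩ := hs
    rw [Real.norm_eq_abs, abs_of_pos (fj_pos N γ j s)]
    have hA : (0:ℝ) ≤ 1 + |γ| := by positivity
    have hjpos : (0:ℝ) < j := by exact_mod_cast hj
    have key : (gco γ s) * (moser N j s ^ N / s ^ (N-1)) ≤ (1 + |γ|) * (j + 1) := by
      rcases le_or_gt s (1 / (j:ℝ)) with h | h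
      · rw [quot_left hN hj hs0 h]
        have hq : (0:ℝ) ≤ (j:ℝ) * s := by positivity
        have h1 : gco γ s * ((j:ℝ)*s) ≤ (1+|γ|) * Real.log (Real.exp 1 / s) * ((j:ℝ)*s) := by
          apply mul_le_mul_of_nonneg_right _ hq
          calc gco γ s ≤ |gco γ s| := le_abs_self _
          _ ≤ _ := abs_gco_le hs0 hs1
        have h2 : Real.log (Real.exp 1 / s) * ((j:ℝ)*s) ≤ j + 1 := by
          rw [logE_eq hs0]
          have hl : -Real.log s = Real.log (1/s) := by rw [one_div, Real.log_inv]
          have h3 : s * Real.log (1/s) ≤ 1 / Real.exp 1 := t_log_le hs0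
          have hE : (1:ℝ) ≤ Real.exp 1 := by
            have := Real.add_one_le_exp 1; linarith [Real.exp_one_gt_d9]
          have h4 : 1 / Real.exp 1 ≤ 1 := by
            rw [div_le_one (by positivity)]; exact hE
          have hjs : (j:ℝ) * s ≤ 1 := by
            rw [le_div_iff₀ hjpos] at h; linarith [h, mul_comm (j:ℝ) s]
          have : (1 - Real.log s) * ((j:ℝ)*s) = (j:ℝ)*s + (j:ℝ)*(s * Real.log (1/s)) := by
            rw [← hl]; ring
          rw [this]
          have : (j:ℝ)*(s * Real.log (1/s)) ≤ (j:ℝ) * 1 := by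
            apply mul_le_mul_of_nonneg_left (h3.trans h4) (le_of_lt hjpos)
          linarith
        calc gco γ s * ((j:ℝ)*s) ≤ (1+|γ|) * (Real.log (Real.exp 1 / s) * ((j:ℝ)*s)) := by
              calc gco γ s * ((j:ℝ)*s) ≤ (1+|γ|) * Real.log (Real.exp 1 / s) * ((j:ℝ)*s) := h1
              _ = (1+|γ|) * (Real.log (Real.exp 1 / s) * ((j:ℝ)*s)) := by ring
        _ ≤ (1+|γ|) * (j+1) := mul_le_mul_of_nonneg_left h2 hA
      · rw [quot_right hN hj hs0 h]
        have hjs1 : (1:ℝ) ≤ (j:ℝ) * s := by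
          rw [div_lt_iff₀ hjpos] at h; linarith [mul_comm s (j:ℝ)]
        have hpow : (1:ℝ) ≤ ((j:ℝ)*s)^(N-1) := by
          calc (1:ℝ) = 1 ^ (N-1) := (one_pow _).symm
          _ ≤ _ := pow_le_pow_left₀ (by norm_num) hjs1 _
        have hq : 0 < 1 / ((j:ℝ)*s)^(N-1) := by positivity
        have hq1 : 1 / ((j:ℝ)*s)^(N-1) ≤ 1 := by
          rw [div_le_one (by positivity)]; exact hpow
        have h1 : gco γ s * (1/((j:ℝ)*s)^(N-1)) ≤ (1+|γ|) * Real.log (Real.exp 1 / s) * (1/((j:ℝ)*s)^(N-1)) := by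
          apply mul_le_mul_of_nonneg_right _ hq.le
          calc gco γ s ≤ |gco γ s| := le_abs_self _
          _ ≤ _ := abs_gco_le hs0 hs1
        have hlogE : Real.log (Real.exp 1 / s) ≤ 1 + (j:ℝ) := by
          rw [logE_eq hs0]
          have h4 : Real.log (1/(j:ℝ)) < Real.log s := Real.log_lt_log (by positivity) h
          rw [one_div, Real.log_inv] at h4
          have h5 : Real.log j ≤ (j:ℝ) - 1 := Real.log_le_sub_one_of_pos hjpos
          linarith
        have hlogEpos : 0 ≤ Real.log (Real.exp 1 / s) := by linarith [one_le_logE hs0 hs1]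
        calc gco γ s * (1/((j:ℝ)*s)^(N-1))
            ≤ (1+|γ|) * Real.log (Real.exp 1 / s) * (1/((j:ℝ)*s)^(N-1)) := h1
        _ ≤ (1+|γ|) * Real.log (Real.exp 1 / s) * 1 :=
              mul_le_mul_of_nonneg_left hq1 (by positivity)
        _ = (1+|γ|) * Real.log (Real.exp 1 / s) := mul_one _
        _ ≤ (1+|γ|) * ((j:ℝ)+1) := by
              apply mul_le_mul_of_nonneg_left _ hA
              linarith
    calc fj N γ j s = Real.exp (gco γ s * (moser N j s ^ N / s ^ (N-1))) := rfl
    _ ≤ _ := Real.exp_le_exp.2 key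
  have hmeas : MeasurableSet (Set.Ioc (0:ℝ) 1) := measurableSet_Ioc
  apply Integrable.mono' (g := fun _ => Real.exp ((1 + |γ|) * (j + 1)))
    _ ((fj_measurable N γ j).aestronglyMeasurable)
  · exact (ae_restrict_iff' hmeas).2 (ae_of_all _ hbdd)
  · exact integrableOn_const measure_Ioc_lt_top.ne


lemma Jfun_zero (N : ℕ) (hN : 2 ≤ N) (γ : ℝ) : Jfun N γ (fun _ => 0) = 1 := by
  unfold Jfun
  have h : ∀ s : ℝ, Real.exp ((Real.log (Real.exp 1 / s) +
      γ * Real.log (Real.log (Real.exp 1 / s))) * ((fun _ : ℝ => (0:ℝ)) s ^ N / s ^ (N - 1))) = 1 := by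
    intro s
    rw [show (fun _ : ℝ => (0:ℝ)) s = 0 from rfl, zero_pow (by omega), zero_div, mul_zero,
      Real.exp_zero]
  simp only [h]
  rw [setIntegral_const, Real.volume_real_Ioc, smul_eq_mul]
  norm_num

lemma integral_exp_affine (a b x y : ℝ) (hb : b ≠ 0) :
    ∫ s in x..y, Real.exp (a + b*s) = (Real.exp (a + b*y) - Real.exp (a + b*x))/b := by
  have hder : ∀ s ∈ Set.uIcc x y,
      HasDerivAt (fun u => Real.exp (a + b*u)/b) (Real.exp (a + b*s)) s := by
    intro s _
    have h1 : HasDerivAt (fun u : ℝ => a + b*u) b s := by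
      simpa using ((hasDerivAt_id s).const_mul b).const_add a
    have h2 := (h1.exp).div_const b
    rw [mul_div_cancel_right₀ _ hb] at h2
    exact h2
  rw [intervalIntegral.integral_eq_sub_of_hasDerivAt hder
    ((Real.continuous_exp.comp (continuous_const.add (continuous_const.mul continuous_id))).intervalIntegrable x y)]
  ring

lemma integral_le_const {f : ℝ → ℝ} {x y c : ℝ} (hxy : x ≤ y) (hf : IntegrableOn f (Set.Ioc x y))
    (h : ∀ s ∈ Set.Ioc x y, f s ≤ c) : ∫ s in Set.Ioc x y, f s ≤ (y - x) * c := by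
  calc ∫ s in Set.Ioc x y, f s ≤ ∫ _s in Set.Ioc x y, c :=
        setIntegral_mono_on hf (integrableOn_const measure_Ioc_lt_top.ne)
          measurableSet_Ioc h
  _ = (y-x)*c := by
        rw [setIntegral_const, Real.volume_real_Ioc_of_le hxy, smul_eq_mul]

lemma integral_le_exp_affine {f : ℝ → ℝ} {x y a b : ℝ} (hxy : x ≤ y) (hb : b ≠ 0)
    (hf : IntegrableOn f (Set.Ioc x y)) (h : ∀ s ∈ Set.Ioc x y, f s ≤ Real.exp (a + b*s)) :
    ∫ s in Set.Ioc x y, f s ≤ (Real.exp (a+b*y) - Real.exp (a+b*x))/b := by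
  calc ∫ s in Set.Ioc x y, f s ≤ ∫ s in Set.Ioc x y, Real.exp (a + b*s) :=
        setIntegral_mono_on hf
          ((Real.continuous_exp.comp (continuous_const.add (continuous_const.mul continuous_id))).integrableOn_Ioc)
          measurableSet_Ioc h
  _ = _ := by rw [← intervalIntegral.integral_of_le hxy, integral_exp_affine _ _ _ _ hb]

lemma ell_ge_one {j : ℕ} (hj : 1 ≤ j) : 1 ≤ ell j := by
  unfold ell
  have : (0:ℝ) ≤ Real.log j := Real.log_nonneg (by exact_mod_cast hj)
  linarith

lemma exp_ell {j : ℕ} (hj : 1 ≤ j) : Real.exp (ell j) = Real.exp 1 * j := by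
  unfold ell
  rw [Real.exp_add, Real.exp_log (by exact_mod_cast hj : (0:ℝ) < j)]

lemma exp_mul_log {x c : ℝ} (hx : 0 < x) : Real.exp (c * Real.log x) = x ^ c := by
  rw [Real.rpow_def_of_pos hx, mul_comm]


lemma exp_one_bounds : (2:ℝ) ≤ Real.exp 1 ∧ Real.exp 1 ≤ 2.7182818286 := by
  constructor
  · linarith [Real.add_one_le_exp 1]
  · linarith [Real.exp_one_lt_d9]

lemma bound1a (N : ℕ) (hN : 2 ≤ N) (γ : ℝ) (hgp : max γ 0 ≤ 1) (j : ℕ) (hj : 1 ≤ j) :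
    ∫ s in Set.Ioc (0:ℝ) (1/(2*(j:ℝ))), fj N γ j s ≤ 4 * (j:ℝ)^((1 + max γ 0)/2 - 1) := by
  set gp := max γ 0 with hgpdef
  have hgp0 : 0 ≤ gp := le_max_right _ _
  set β : ℝ := (1 + gp)/2 with hβ
  have hβ0 : 0 ≤ β := by positivity
  have hβ1 : β ≤ 1 := by rw [hβ]; linarith
  have hjpos : (0:ℝ) < j := by exact_mod_cast hj
  have hE2 := exp_one_bounds.1
  have hEd := exp_one_bounds.2
  have hx : (0:ℝ) ≤ 1/(2*(j:ℝ)) := by positivity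
  have hbd : ∀ s ∈ Set.Ioc (0:ℝ) (1/(2*(j:ℝ))), fj N γ j s ≤ Real.exp (1 + β * ell j) := by
    intro s hs
    obtain ⟨hs0, hs2⟩ := hs
    have hsj : s ≤ 1/(j:ℝ) := by
      apply hs2.trans
      rw [div_le_div_iff₀ (by positivity) hjpos]
      linarith
    have hs1 : s ≤ 1 := by
      apply hsj.trans
      rw [div_le_one hjpos]; exact_mod_cast hj
    rw [exponent_left hN hj γ hs0 hsj, Real.exp_le_exp]
    have hjs0 : 0 < (j:ℝ)*s := by positivity
    have hjs : (j:ℝ)*s ≤ 1/2 := by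
      calc (j:ℝ)*s ≤ (j:ℝ)*(1/(2*(j:ℝ))) := mul_le_mul_of_nonneg_left hs2 hjpos.le
      _ = 1/2 := by field_simp
    have h1 : gco γ s * ((j:ℝ)*s) ≤ (1+gp) * Real.log (Real.exp 1 / s) * ((j:ℝ)*s) :=
      mul_le_mul_of_nonneg_right (gco_le hs0 hs1) hjs0.le
    have h2 : Real.log (Real.exp 1 / s) * ((j:ℝ)*s) ≤ ell j / 2 + 1/2 := by
      rw [logE_eq hs0]
      have hlog : Real.log (1/s) = Real.log j + Real.log (1/((j:ℝ)*s)) := by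
        rw [one_div, one_div, Real.log_inv, Real.log_inv, Real.log_mul hjpos.ne' hs0.ne']
        ring
      have h3 : ((j:ℝ)*s) * Real.log (1/((j:ℝ)*s)) ≤ 1/Real.exp 1 := t_log_le hjs0
      have h4 : 1/Real.exp 1 ≤ 1/2 := by
        rw [div_le_div_iff₀ (by positivity) (by norm_num)]; linarith
      have h5 : (1 - Real.log s) * ((j:ℝ)*s) =
          ((j:ℝ)*s) * (1 + Real.log j) + ((j:ℝ)*s) * Real.log (1/((j:ℝ)*s)) := by
        have : (1:ℝ) - Real.log s = 1 + Real.log (1/s) := by rw [one_div, Real.log_inv]; ring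
        rw [this, hlog]; ring
      rw [h5]
      have hell : 0 ≤ 1 + Real.log j := by
        have := Real.log_nonneg (by exact_mod_cast hj : (1:ℝ) ≤ j); linarith
      have h6 : ((j:ℝ)*s) * (1 + Real.log j) ≤ (1/2) * (1 + Real.log j) :=
        mul_le_mul_of_nonneg_right hjs hell
      unfold ell
      linarith
    calc gco γ s * ((j:ℝ)*s) ≤ (1+gp) * (Real.log (Real.exp 1 / s) * ((j:ℝ)*s)) := by
          calc _ ≤ (1+gp) * Real.log (Real.exp 1 / s) * ((j:ℝ)*s) := h1
          _ = _ := by ring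
    _ ≤ (1+gp) * (ell j / 2 + 1/2) := mul_le_mul_of_nonneg_left h2 (by linarith)
    _ = β * ell j + (1+gp)/2 := by rw [hβ]; ring
    _ ≤ 1 + β * ell j := by linarith
  have hj1r : (1:ℝ) ≤ j := by exact_mod_cast hj
  have hhalf_le_one : 1/(2*(j:ℝ)) ≤ 1 := by
    rw [div_le_one (by positivity)]; linarith
  have hint := (fj_integrableOn N hN γ j hj).mono_set
    (Set.Ioc_subset_Ioc le_rfl hhalf_le_one)
  have := integral_le_const hx hint hbd
  calc ∫ s in Set.Ioc (0:ℝ) (1/(2*(j:ℝ))), fj N γ j s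
      ≤ (1/(2*(j:ℝ)) - 0) * Real.exp (1 + β * ell j) := this
  _ ≤ 4 * (j:ℝ)^(β - 1) := by
      have hexp : Real.exp (1 + β * ell j) = Real.exp (1 + β) * (j:ℝ)^β := by
        unfold ell
        rw [show 1 + β * (1 + Real.log j) = (1 + β) + β * Real.log j by ring, Real.exp_add,
          exp_mul_log hjpos]
      rw [hexp, sub_zero]
      have hrw : (j:ℝ)^(β - 1) = (j:ℝ)^β / j := by
        rw [Real.rpow_sub hjpos, Real.rpow_one]
      rw [hrw]
      have hβpow : 0 < (j:ℝ)^β := Real.rpow_pos_of_pos hjpos β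
      have hee : Real.exp (1 + β) ≤ 8 := by
        calc Real.exp (1 + β) ≤ Real.exp 2 := by
              rw [Real.exp_le_exp]; linarith
        _ = Real.exp 1 * Real.exp 1 := by rw [← Real.exp_add]; norm_num
        _ ≤ 8 := by nlinarith
      rw [div_mul_eq_mul_div, one_mul]
      have heq : 4 * ((j:ℝ)^β/(j:ℝ)) = 8*(j:ℝ)^β/(2*(j:ℝ)) := by field_simp; ring
      rw [heq]
      gcongr ?_ / _
      nlinarith


lemma logE_lt {j : ℕ} (hj : 1 ≤ j) {s : ℝ} (hs0 : 0 < s) (h : 1/(j:ℝ) < s) :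
    Real.log (Real.exp 1 / s) < ell j := by
  have hjpos : (0:ℝ) < j := by exact_mod_cast hj
  rw [logE_eq hs0]
  have h4 : Real.log (1/(j:ℝ)) < Real.log s := Real.log_lt_log (by positivity) h
  rw [one_div, Real.log_inv] at h4
  unfold ell; linarith

lemma gco_le_L {γ : ℝ} {j : ℕ} (hj : 1 ≤ j) {s : ℝ} (hs0 : 0 < s) (hs1 : s ≤ 1)
    (h : 1/(j:ℝ) < s) :
    gco γ s ≤ ell j + max γ 0 * Real.log (ell j) := by
  have h1 := one_le_logE hs0 hs1
  have h2 := logE_lt hj hs0 h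
  have hll : Real.log (Real.log (Real.exp 1 / s)) ≤ Real.log (ell j) :=
    Real.log_le_log (by linarith) h2.le
  have h3 : γ * Real.log (Real.log (Real.exp 1 / s)) ≤ max γ 0 * Real.log (ell j) := by
    calc γ * Real.log (Real.log (Real.exp 1 / s))
        ≤ max γ 0 * Real.log (Real.log (Real.exp 1 / s)) :=
          mul_le_mul_of_nonneg_right (le_max_left _ _) (Real.log_nonneg h1)
    _ ≤ max γ 0 * Real.log (ell j) := mul_le_mul_of_nonneg_left hll (le_max_right _ _)
  unfold gco; linarith

lemma L_pos {γ : ℝ} {j : ℕ} (hj : 1 ≤ j) : 0 < ell j + max γ 0 * Real.log (ell j) := by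
  have h1 := ell_ge_one hj
  have h2 : 0 ≤ Real.log (ell j) := Real.log_nonneg h1
  have h3 : (0:ℝ) ≤ max γ 0 := le_max_right _ _
  nlinarith

lemma exp_L_eq {γ : ℝ} {j : ℕ} (hj : 1 ≤ j) :
    Real.exp (ell j + max γ 0 * Real.log (ell j)) =
      Real.exp 1 * j * (ell j) ^ (max γ 0) := by
  rw [Real.exp_add, exp_ell hj, exp_mul_log (lt_of_lt_of_le one_pos (ell_ge_one hj))]

lemma bound1b (N : ℕ) (hN : 2 ≤ N) (γ : ℝ) (hgp : max γ 0 ≤ 1) (j : ℕ) (hj : 1 ≤ j) :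
    ∫ s in Set.Ioc (1/(2*(j:ℝ))) (1/(j:ℝ)), fj N γ j s ≤ 21 * (ell j) ^ (max γ 0 - 1) := by
  set gp := max γ 0 with hgpdef
  have hgp0 : 0 ≤ gp := le_max_right _ _
  have hjpos : (0:ℝ) < j := by exact_mod_cast hj
  have hj1r : (1:ℝ) ≤ j := by exact_mod_cast hj
  have hell1 : 1 ≤ ell j := ell_ge_one hj
  have hellpos : 0 < ell j := by linarith
  have hlogell : 0 ≤ Real.log (ell j) := Real.log_nonneg hell1
  set L : ℝ := ell j + gp * Real.log (ell j) with hLdef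
  have hL1 : 1 ≤ L := by rw [hLdef]; nlinarith
  have hLell : ell j ≤ L := by rw [hLdef]; nlinarith
  set M : ℝ := L + 2 with hMdef
  have hM0 : 0 < M := by linarith
  have hxy : 1/(2*(j:ℝ)) ≤ 1/(j:ℝ) := by
    rw [div_le_div_iff₀ (by positivity) hjpos]; linarith
  have hE2 := exp_one_bounds.1
  have hEd := exp_one_bounds.2
  have hbd : ∀ s ∈ Set.Ioc (1/(2*(j:ℝ))) (1/(j:ℝ)), fj N γ j s ≤ Real.exp (0 + (M*j)*s) := by
    intro s hs
    obtain ⟨hs0', hs2⟩ := hs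
    have hs0 : 0 < s := lt_trans (by positivity) hs0'
    have hs1 : s ≤ 1 := hs2.trans (by rw [div_le_one hjpos]; exact hj1r)
    rw [exponent_left hN hj γ hs0 hs2, Real.exp_le_exp]
    have hgco : gco γ s ≤ M := by
      have hlogE : Real.log (Real.exp 1 / s) ≤ ell j + 1 := by
        rw [logE_eq hs0]
        have h4 : Real.log (1/(2*(j:ℝ))) < Real.log s := Real.log_lt_log (by positivity) hs0'
        rw [one_div, Real.log_inv, Real.log_mul (by norm_num) hjpos.ne'] at h4
        have hlog2 : Real.log 2 ≤ 1 := by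
          have := Real.log_le_sub_one_of_pos (by norm_num : (0:ℝ) < 2); linarith
        unfold ell; linarith
      have hll : Real.log (Real.log (Real.exp 1 / s)) ≤ 1 + Real.log (ell j) := by
        calc Real.log (Real.log (Real.exp 1 / s)) ≤ Real.log (ell j + 1) :=
              Real.log_le_log (by linarith [one_le_logE hs0 hs1]) hlogE
        _ ≤ Real.log (2 * ell j) := Real.log_le_log (by linarith) (by linarith)
        _ = Real.log 2 + Real.log (ell j) := Real.log_mul (by norm_num) hellpos.ne'
        _ ≤ 1 + Real.log (ell j) := by
              have := Real.log_le_sub_one_of_pos (by norm_num : (0:ℝ) < 2); linarith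
      have h3 : γ * Real.log (Real.log (Real.exp 1 / s)) ≤ gp * (1 + Real.log (ell j)) := by
        calc γ * Real.log (Real.log (Real.exp 1 / s))
            ≤ gp * Real.log (Real.log (Real.exp 1 / s)) :=
              mul_le_mul_of_nonneg_right (le_max_left _ _) (loglog_nonneg hs0 hs1)
        _ ≤ gp * (1 + Real.log (ell j)) := mul_le_mul_of_nonneg_left hll hgp0
      have : gp * (1 + Real.log (ell j)) = gp + gp * Real.log (ell j) := by ring
      unfold gco
      rw [hMdef, hLdef]
      nlinarith
    have hjs0 : (0:ℝ) ≤ (j:ℝ)*s := by positivity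
    calc gco γ s * ((j:ℝ)*s) ≤ M * ((j:ℝ)*s) := mul_le_mul_of_nonneg_right hgco hjs0
    _ = 0 + (M*j)*s := by ring
  have hsub : Set.Ioc (1/(2*(j:ℝ))) (1/(j:ℝ)) ⊆ Set.Ioc (0:ℝ) 1 := by
    apply Set.Ioc_subset_Ioc (by positivity)
    rw [div_le_one hjpos]; exact hj1r
  have hint := (fj_integrableOn N hN γ j hj).mono_set hsub
  have hb : M * (j:ℝ) ≠ 0 := by positivity
  have hmain := integral_le_exp_affine hxy hb hint hbd
  have hv1 : 0 + M*(j:ℝ)*(1/(j:ℝ)) = M := by field_simp; ring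
  have hv2 : (0:ℝ) ≤ 0 + M*(j:ℝ)*(1/(2*(j:ℝ))) := by positivity
  rw [hv1] at hmain
  have hstep : (Real.exp M - Real.exp (0 + M*(j:ℝ)*(1/(2*(j:ℝ)))))/(M*j) ≤ Real.exp M / (M*j) := by
    apply div_le_div_of_nonneg_right ?_ (by positivity)
    linarith [Real.exp_pos (0 + M*(j:ℝ)*(1/(2*(j:ℝ))))]
  have hexpM : Real.exp M = Real.exp 2 * (Real.exp 1 * j * (ell j)^gp) := by
    rw [hMdef, add_comm, Real.exp_add, exp_L_eq hj]
  have hpowpos : 0 < (ell j)^gp := Real.rpow_pos_of_pos hellpos _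
  have hfin : Real.exp M / (M*j) ≤ 21 * (ell j)^(gp - 1) := by
    have hrw : (ell j)^(gp-1) = (ell j)^gp / ell j := by
      rw [Real.rpow_sub hellpos, Real.rpow_one]
    rw [hexpM, hrw]
    have he3 : Real.exp 2 * Real.exp 1 ≤ 21 := by
      rw [show (2:ℝ) = 1+1 by norm_num, Real.exp_add]
      have hE2 := exp_one_bounds.1
      nlinarith [exp_one_bounds.2]
    calc Real.exp 2 * (Real.exp 1 * j * (ell j)^gp) / (M*j)
        ≤ Real.exp 2 * (Real.exp 1 * j * (ell j)^gp) / (ell j*j) := by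
          apply div_le_div_of_nonneg_left (by positivity) (by positivity)
          nlinarith
    _ = Real.exp 2 * Real.exp 1 * ((ell j)^gp/ell j) := by field_simp
    _ ≤ 21 * ((ell j)^gp / ell j) := mul_le_mul_of_nonneg_right he3 (by positivity)
  exact hmain.trans (hstep.trans hfin)


lemma exponent_right_le {N j : ℕ} (hN : 2 ≤ N) (hj : 1 ≤ j) {γ : ℝ} {s : ℝ} (hs0 : 0 < s)
    (hs1 : s ≤ 1) (h : 1/(j:ℝ) < s) {B : ℝ}
    (hB : (ell j + max γ 0 * Real.log (ell j)) * (1/((j:ℝ)*s)) ≤ B) :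
    fj N γ j s ≤ Real.exp B := by
  have hjpos : (0:ℝ) < j := by exact_mod_cast hj
  have hjs1 : (1:ℝ) < (j:ℝ)*s := by
    rw [div_lt_iff₀ hjpos] at h; linarith [mul_comm s (j:ℝ)]
  have hpow : (j:ℝ)*s ≤ ((j:ℝ)*s)^(N-1) := le_self_pow₀ (by linarith) (by omega)
  have hq0 : (0:ℝ) < 1/((j:ℝ)*s)^(N-1) := by positivity
  have hq : 1/((j:ℝ)*s)^(N-1) ≤ 1/((j:ℝ)*s) := by
    apply div_le_div_of_nonneg_left (by norm_num) (by linarith)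
    exact hpow
  rw [exponent_right hN hj γ hs0 h, Real.exp_le_exp]
  have hL := L_pos (γ := γ) hj
  calc gco γ s * (1/((j:ℝ)*s)^(N-1))
      ≤ (ell j + max γ 0 * Real.log (ell j)) * (1/((j:ℝ)*s)^(N-1)) :=
        mul_le_mul_of_nonneg_right (gco_le_L hj hs0 hs1 h) hq0.le
  _ ≤ (ell j + max γ 0 * Real.log (ell j)) * (1/((j:ℝ)*s)) :=
        mul_le_mul_of_nonneg_left hq hL.le
  _ ≤ B := hB

lemma bound2 (N : ℕ) (hN : 2 ≤ N) (γ : ℝ) (j : ℕ) (hj : 2 ≤ j) :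
    ∫ s in Set.Ioc (1/(j:ℝ)) (2/(j:ℝ)), fj N γ j s ≤ 6 * (ell j) ^ (max γ 0 - 1) := by
  set gp := max γ 0 with hgpdef
  have hgp0 : 0 ≤ gp := le_max_right _ _
  have hj1 : 1 ≤ j := by omega
  have hjpos : (0:ℝ) < j := by exact_mod_cast hj1
  have hj2r : (2:ℝ) ≤ j := by exact_mod_cast hj
  have hell1 : 1 ≤ ell j := ell_ge_one hj1
  have hellpos : 0 < ell j := by linarith
  set L : ℝ := ell j + gp * Real.log (ell j) with hLdef
  have hL0 : 0 < L := L_pos hj1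
  have hLell : ell j ≤ L := by
    rw [hLdef]; nlinarith [Real.log_nonneg hell1]
  have hxy : 1/(j:ℝ) ≤ 2/(j:ℝ) := by
    rw [div_le_div_iff₀ hjpos hjpos]; nlinarith
  have hbd : ∀ s ∈ Set.Ioc (1/(j:ℝ)) (2/(j:ℝ)), fj N γ j s ≤
      Real.exp (3*L/2 + (-(L*j/2))*s) := by
    intro s hs
    obtain ⟨hs0', hs2⟩ := hs
    have hs0 : 0 < s := lt_trans (by positivity) hs0'
    have hs1 : s ≤ 1 := by
      apply hs2.trans
      rw [div_le_one hjpos]; exact hj2r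
    apply exponent_right_le hN hj1 hs0 hs1 hs0'
    rw [← hLdef]
    have hjs1 : (1:ℝ) < (j:ℝ)*s := by
      rw [div_lt_iff₀ hjpos] at hs0'; linarith [mul_comm s (j:ℝ)]
    have hjs2 : (j:ℝ)*s ≤ 2 := by
      calc (j:ℝ)*s ≤ (j:ℝ)*(2/(j:ℝ)) := mul_le_mul_of_nonneg_left hs2 hjpos.le
      _ = 2 := by field_simp
    have hkey : 1/((j:ℝ)*s) ≤ (3 - (j:ℝ)*s)/2 := by
      rw [div_le_div_iff₀ (by linarith) (by norm_num)]
      nlinarith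
    calc L * (1/((j:ℝ)*s)) ≤ L * ((3 - (j:ℝ)*s)/2) := mul_le_mul_of_nonneg_left hkey hL0.le
    _ = 3*L/2 + (-(L*j/2))*s := by ring
  have hsub : Set.Ioc (1/(j:ℝ)) (2/(j:ℝ)) ⊆ Set.Ioc (0:ℝ) 1 := by
    apply Set.Ioc_subset_Ioc (by positivity)
    rw [div_le_one hjpos]; exact hj2r
  have hint := (fj_integrableOn N hN γ j hj1).mono_set hsub
  have hb : -(L*(j:ℝ)/2) ≠ 0 := by
    have : (0:ℝ) < L*(j:ℝ)/2 := by positivity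
    linarith
  have hmain := integral_le_exp_affine hxy hb hint hbd
  have hv1 : 3*L/2 + (-(L*(j:ℝ)/2))*(2/(j:ℝ)) = L/2 := by field_simp; ring
  have hv2 : 3*L/2 + (-(L*(j:ℝ)/2))*(1/(j:ℝ)) = L := by field_simp; ring
  rw [hv1, hv2] at hmain
  have hstep : (Real.exp (L/2) - Real.exp L)/(-(L*(j:ℝ)/2)) ≤ 2 * Real.exp L/(L*(j:ℝ)) := by
    have hc : (0:ℝ) < L*(j:ℝ)/2 := by positivity
    have he : (Real.exp (L/2) - Real.exp L)/(-(L*(j:ℝ)/2)) =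
        (Real.exp L - Real.exp (L/2))/(L*(j:ℝ)/2) := by
      rw [div_neg]; ring
    rw [he]
    have h1 : (Real.exp L - Real.exp (L/2))/(L*(j:ℝ)/2) ≤ Real.exp L/(L*(j:ℝ)/2) := by
      apply div_le_div_of_nonneg_right ?_ (by positivity)
      linarith [Real.exp_pos (L/2)]
    calc (Real.exp L - Real.exp (L/2))/(L*(j:ℝ)/2) ≤ Real.exp L/(L*(j:ℝ)/2) := h1
    _ = 2 * Real.exp L/(L*(j:ℝ)) := by field_simp
  have hfin : 2 * Real.exp L/(L*(j:ℝ)) ≤ 6 * (ell j) ^ (gp - 1) := by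
    rw [hLdef, exp_L_eq hj1, ← hLdef]
    have hrw : (ell j)^(gp-1) = (ell j)^gp / ell j := by
      rw [Real.rpow_sub hellpos, Real.rpow_one]
    rw [hrw]
    have hpowpos : 0 < (ell j)^gp := Real.rpow_pos_of_pos hellpos _
    calc 2 * (Real.exp 1 * j * (ell j)^gp)/(L*(j:ℝ))
        ≤ 2 * (Real.exp 1 * j * (ell j)^gp)/(ell j*(j:ℝ)) := by
          apply div_le_div_of_nonneg_left (by positivity) (by positivity)
          nlinarith
    _ = 2 * Real.exp 1 * ((ell j)^gp / ell j) := by field_simp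
    _ ≤ 6 * ((ell j)^gp / ell j) := by
          apply mul_le_mul_of_nonneg_right ?_ (by positivity)
          linarith [exp_one_bounds.2]
  exact hmain.trans (hstep.trans hfin)


lemma bound34 (N : ℕ) (hN : 2 ≤ N) (γ : ℝ) (hgp : max γ 0 ≤ 1) (j : ℕ) (hj : 2 ≤ j)
    (h3 : (ell j)^2 ≤ j) :
    ∫ s in Set.Ioc (2/(j:ℝ)) ((ell j)^2/(j:ℝ)), fj N γ j s ≤ 2*(ell j)^3/Real.sqrt j := by
  set gp := max γ 0 with hgpdef
  have hgp0 : 0 ≤ gp := le_max_right _ _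
  have hj1 : 1 ≤ j := by omega
  have hjpos : (0:ℝ) < j := by exact_mod_cast hj1
  have hj2r : (2:ℝ) ≤ j := by exact_mod_cast hj
  have hell1 : 1 ≤ ell j := ell_ge_one hj1
  have hellpos : 0 < ell j := by linarith
  have hlogell : 0 ≤ Real.log (ell j) := Real.log_nonneg hell1
  set L : ℝ := ell j + gp * Real.log (ell j) with hLdef
  have hL0 : 0 < L := L_pos hj1
  set r : ℝ := (ell j)^2/(j:ℝ) with hrdef
  have hr1 : r ≤ 1 := by rw [hrdef, div_le_one hjpos]; exact h3
  have hsqrtpos : 0 < Real.sqrt j := Real.sqrt_pos.2 hjpos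
  rcases le_or_gt r (2/(j:ℝ)) with hord | hord
  · rw [Set.Ioc_eq_empty (by exact not_lt.2 hord), MeasureTheory.setIntegral_empty]
    positivity
  · have hbd : ∀ s ∈ Set.Ioc (2/(j:ℝ)) r, fj N γ j s ≤ Real.exp (L/2) := by
      intro s hs
      obtain ⟨hs0', hs2⟩ := hs
      have hs0 : 0 < s := lt_trans (by positivity) hs0'
      have hs1 : s ≤ 1 := hs2.trans hr1
      have hbr : 1/(j:ℝ) < s := lt_of_le_of_lt (by rw [div_le_div_iff₀ hjpos hjpos]; nlinarith) hs0'
      apply exponent_right_le hN hj1 hs0 hs1 hbr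
      rw [← hLdef]
      have hjs2 : (2:ℝ) < (j:ℝ)*s := by
        have := mul_lt_mul_of_pos_left hs0' hjpos
        calc (2:ℝ) = (j:ℝ)*(2/(j:ℝ)) := by field_simp
        _ < (j:ℝ)*s := this
      have hq : 1/((j:ℝ)*s) ≤ 1/2 := by
        rw [div_le_div_iff₀ (by linarith) (by norm_num)]
        linarith
      calc L * (1/((j:ℝ)*s)) ≤ L * (1/2) := mul_le_mul_of_nonneg_left hq hL0.le
      _ = L/2 := by ring
    have hsub : Set.Ioc (2/(j:ℝ)) r ⊆ Set.Ioc (0:ℝ) 1 := by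
      apply Set.Ioc_subset_Ioc (by positivity) hr1
    have hint := (fj_integrableOn N hN γ j hj1).mono_set hsub
    have hmain := integral_le_const hord.le hint hbd
    have hexphalf : Real.exp (L/2) ≤ 2 * Real.sqrt j * ell j := by
      have h1 : Real.exp (L/2) = Real.exp (ell j/2) * Real.exp (gp * Real.log (ell j)/2) := by
        rw [← Real.exp_add, hLdef]; ring_nf
      have h2 : Real.exp (gp * Real.log (ell j)/2) ≤ ell j := by
        have hh : gp * Real.log (ell j)/2 ≤ Real.log (ell j) := by nlinarith
        calc Real.exp (gp * Real.log (ell j)/2) ≤ Real.exp (Real.log (ell j)) :=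
              Real.exp_le_exp.2 hh
        _ = ell j := Real.exp_log hellpos
      have h3' : Real.exp (ell j/2) ≤ 2 * Real.sqrt j := by
        have hx : Real.exp (ell j/2) = (Real.exp 1 * j) ^ ((1:ℝ)/2) := by
          rw [← exp_ell hj1, ← Real.exp_mul]
          congr 1; ring
        rw [hx]
        have h4 : (Real.exp 1 * j) ^ ((1:ℝ)/2) ≤ ((4:ℝ)*j) ^ ((1:ℝ)/2) := by
          apply Real.rpow_le_rpow (by positivity) ?_ (by norm_num)
          nlinarith [exp_one_bounds.2]
        calc (Real.exp 1 * j) ^ ((1:ℝ)/2) ≤ ((4:ℝ)*j) ^ ((1:ℝ)/2) := h4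
        _ = Real.sqrt ((4:ℝ)*j) := (Real.sqrt_eq_rpow _).symm
        _ = Real.sqrt 4 * Real.sqrt j := Real.sqrt_mul (by norm_num) _
        _ = 2 * Real.sqrt j := by
              rw [show (4:ℝ) = 2^2 by norm_num, Real.sqrt_sq (by norm_num : (0:ℝ) ≤ 2)]
      calc Real.exp (L/2) = Real.exp (ell j/2) * Real.exp (gp * Real.log (ell j)/2) := h1
      _ ≤ (2*Real.sqrt j) * ell j := by
            apply mul_le_mul h3' h2 (Real.exp_pos _).le (by positivity)
      _ = 2 * Real.sqrt j * ell j := by ring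
    have hfin : (r - 2/(j:ℝ)) * Real.exp (L/2) ≤ 2*(ell j)^3/Real.sqrt j := by
      have hsq : Real.sqrt j * Real.sqrt j = (j:ℝ) := Real.mul_self_sqrt hjpos.le
      have hub : (r - 2/(j:ℝ)) * Real.exp (L/2) ≤ r * (2 * Real.sqrt j * ell j) := by
        apply mul_le_mul ?_ hexphalf (Real.exp_pos _).le ?_
        · rw [hrdef]
          have : (0:ℝ) ≤ 2/(j:ℝ) := by positivity
          linarith
        · rw [hrdef]; positivity
      apply hub.trans
      apply le_of_eq
      rw [hrdef, ← hsq]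
      field_simp
      rw [Real.sqrt_sq (Real.sqrt_nonneg _)]
    exact hmain.trans hfin


lemma abs_exp_sub_one_le (x : ℝ) : |Real.exp x - 1| ≤ Real.exp |x| - 1 := by
  rcases le_or_gt 0 x with h | h
  · rw [abs_of_nonneg h, abs_of_nonneg (by linarith [Real.one_le_exp h] : (0:ℝ) ≤ Real.exp x - 1)]
  · have hlt : Real.exp x < 1 := by
      have := Real.exp_lt_exp.2 h
      rwa [Real.exp_zero] at this
    rw [abs_of_neg h, abs_of_nonpos (by linarith : Real.exp x - 1 ≤ 0)]
    have h1 := Real.add_one_le_exp x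
    have h2 := Real.add_one_le_exp (-x)
    linarith

lemma bound5 (N : ℕ) (hN : 2 ≤ N) (γ : ℝ) (j : ℕ) (hj : 1 ≤ j)
    (h3 : (ell j)^2 ≤ j) :
    |(∫ s in Set.Ioc ((ell j)^2/(j:ℝ)) 1, fj N γ j s) - (1 - (ell j)^2/(j:ℝ))| ≤
      Real.exp ((1+|γ|)/ell j) - 1 := by
  have hjpos : (0:ℝ) < j := by exact_mod_cast hj
  have hell1 : 1 ≤ ell j := ell_ge_one hj
  have hellpos : 0 < ell j := by linarith
  set r : ℝ := (ell j)^2/(j:ℝ) with hrdef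
  have hr0 : 0 < r := by rw [hrdef]; positivity
  have hr1 : r ≤ 1 := by rw [hrdef, div_le_one hjpos]; exact h3
  set C : ℝ := Real.exp ((1+|γ|)/ell j) - 1 with hCdef
  have hC0 : 0 ≤ C := by
    rw [hCdef]
    have : (0:ℝ) ≤ (1+|γ|)/ell j := by positivity
    linarith [Real.one_le_exp this]
  have hbd : ∀ s ∈ Set.Ioc r 1, |fj N γ j s - 1| ≤ C := by
    intro s hs
    obtain ⟨hs0', hs1⟩ := hs
    have hs0 : 0 < s := lt_trans hr0 hs0'
    have hbr : 1/(j:ℝ) < s := by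
      apply lt_of_le_of_lt ?_ hs0'
      rw [hrdef, div_le_div_iff₀ hjpos hjpos]
      nlinarith [sq_nonneg (ell j - 1), sq_nonneg (ell j + 1)]
    have hjs : (ell j)^2 ≤ (j:ℝ)*s := by
      have := mul_le_mul_of_nonneg_left hs0'.le hjpos.le
      calc (ell j)^2 = (j:ℝ)*r := by rw [hrdef]; field_simp
      _ ≤ (j:ℝ)*s := this
    have hjs1 : (1:ℝ) ≤ (j:ℝ)*s := le_trans (by nlinarith) hjs
    have habs : |gco γ s * (1/((j:ℝ)*s)^(N-1))| ≤ (1+|γ|)/ell j := by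
      rw [abs_mul]
      have hq0 : (0:ℝ) < ((j:ℝ)*s)^(N-1) := by positivity
      have hqabs : |1/((j:ℝ)*s)^(N-1)| = 1/((j:ℝ)*s)^(N-1) := abs_of_pos (by positivity)
      rw [hqabs]
      have hpow : (j:ℝ)*s ≤ ((j:ℝ)*s)^(N-1) := le_self_pow₀ (by linarith) (by omega)
      have hq : 1/((j:ℝ)*s)^(N-1) ≤ 1/(ell j)^2 := by
        rw [div_le_div_iff₀ hq0 (by positivity)]
        nlinarith
      have hg := abs_gco_le (γ := γ) hs0 hs1
      have hlogE : Real.log (Real.exp 1 / s) ≤ ell j := (logE_lt hj hs0 hbr).le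
      have hgell : |gco γ s| ≤ (1+|γ|) * ell j := by
        apply hg.trans
        apply mul_le_mul_of_nonneg_left hlogE (by positivity)
      calc |gco γ s| * (1/((j:ℝ)*s)^(N-1)) ≤ ((1+|γ|) * ell j) * (1/(ell j)^2) := by
            apply mul_le_mul hgell hq (by positivity) (by positivity)
      _ = (1+|γ|)/ell j := by field_simp
    rw [exponent_right hN hj γ hs0 hbr]
    calc |Real.exp (gco γ s * (1/((j:ℝ)*s)^(N-1))) - 1|
        ≤ Real.exp |gco γ s * (1/((j:ℝ)*s)^(N-1))| - 1 := abs_exp_sub_one_le _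
    _ ≤ C := by
        rw [hCdef]
        have := Real.exp_le_exp.2 habs
        linarith
  have hsub : Set.Ioc r 1 ⊆ Set.Ioc (0:ℝ) 1 := Set.Ioc_subset_Ioc hr0.le le_rfl
  have hint := (fj_integrableOn N hN γ j hj).mono_set hsub
  have hconst : IntegrableOn (fun _ : ℝ => (1:ℝ)) (Set.Ioc r 1) :=
    integrableOn_const measure_Ioc_lt_top.ne
  have hsplit : (∫ s in Set.Ioc r 1, fj N γ j s) - (1 - r) =
      ∫ s in Set.Ioc r 1, (fj N γ j s - 1) := by
    rw [MeasureTheory.integral_sub hint hconst, setIntegral_const, Real.volume_real_Ioc_of_le (by linarith),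
      smul_eq_mul, mul_one]
  rw [hsplit]
  have hnorm : ‖∫ s in Set.Ioc r 1, (fj N γ j s - 1)‖ ≤ C * (volume (Set.Ioc r 1)).toReal := by
    apply MeasureTheory.norm_setIntegral_le_of_norm_le_const measure_Ioc_lt_top
    · intro s hs
      rw [Real.norm_eq_abs]
      exact hbd s hs
  rw [Real.norm_eq_abs] at hnorm
  apply hnorm.trans
  rw [Real.volume_Ioc, ENNReal.toReal_ofReal (by linarith)]
  nlinarith

lemma split_Ioc {f : ℝ → ℝ} {x y z : ℝ} (hxy : x ≤ y) (hyz : y ≤ z)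
    (hf : IntegrableOn f (Set.Ioc x z)) :
    ∫ s in Set.Ioc x z, f s = (∫ s in Set.Ioc x y, f s) + ∫ s in Set.Ioc y z, f s := by
  rw [← Set.Ioc_union_Ioc_eq_Ioc hxy hyz]
  exact setIntegral_union (Set.Ioc_disjoint_Ioc_of_le le_rfl) measurableSet_Ioc
    (hf.mono_set (Set.Ioc_subset_Ioc le_rfl hyz)) (hf.mono_set (Set.Ioc_subset_Ioc hxy le_rfl))


lemma key (N : ℕ) (hN : 2 ≤ N) (γ : ℝ) (hgp : max γ 0 ≤ 1) (j : ℕ) (hj : 2 ≤ j)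
    (h2 : 2 ≤ (ell j)^2) (h3 : (ell j)^2 ≤ j) :
    |Jfun N γ (moser N j) - 1| ≤
      4*(j:ℝ)^((1 + max γ 0)/2 - 1) + 27*(ell j)^(max γ 0 - 1)
        + 2*(ell j)^3/Real.sqrt j + (ell j)^2/(j:ℝ)
        + (Real.exp ((1+|γ|)/ell j) - 1) := by
  have hj1 : 1 ≤ j := by omega
  have hjpos : (0:ℝ) < j := by exact_mod_cast hj1
  have hell1 : 1 ≤ ell j := ell_ge_one hj1
  set r : ℝ := (ell j)^2/(j:ℝ) with hrdef
  have o1 : (0:ℝ) ≤ 1/(2*(j:ℝ)) := by positivity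
  have o2 : 1/(2*(j:ℝ)) ≤ 1/(j:ℝ) := by rw [div_le_div_iff₀ (by positivity) hjpos]; linarith
  have o3 : 1/(j:ℝ) ≤ 2/(j:ℝ) := by rw [div_le_div_iff₀ hjpos hjpos]; nlinarith
  have o4 : 2/(j:ℝ) ≤ r := by rw [hrdef, div_le_div_iff₀ hjpos hjpos]; nlinarith
  have o5 : r ≤ 1 := by rw [hrdef, div_le_one hjpos]; exact h3
  have hI := fj_integrableOn N hN γ j hj1
  have e1 := split_Ioc o1 ((o2.trans o3).trans (o4.trans o5)) hI
  have e2 := split_Ioc o2 ((o3.trans o4).trans o5) (hI.mono_set (Set.Ioc_subset_Ioc o1 le_rfl))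
  have e3 := split_Ioc o3 (o4.trans o5)
    (hI.mono_set (Set.Ioc_subset_Ioc (o1.trans o2) le_rfl))
  have e4 := split_Ioc o4 o5
    (hI.mono_set (Set.Ioc_subset_Ioc ((o1.trans o2).trans o3) le_rfl))
  have hb1 := bound1a N hN γ hgp j hj1
  have hb2 := bound1b N hN γ hgp j hj1
  have hb3 := bound2 N hN γ j hj
  have hb4 := bound34 N hN γ hgp j hj h3
  have hb5 := bound5 N hN γ j hj1 h3
  have hn1 : 0 ≤ ∫ s in Set.Ioc (0:ℝ) (1/(2*(j:ℝ))), fj N γ j s :=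
    setIntegral_nonneg measurableSet_Ioc (fun s _ => (fj_pos N γ j s).le)
  have hn2 : 0 ≤ ∫ s in Set.Ioc (1/(2*(j:ℝ))) (1/(j:ℝ)), fj N γ j s :=
    setIntegral_nonneg measurableSet_Ioc (fun s _ => (fj_pos N γ j s).le)
  have hn3 : 0 ≤ ∫ s in Set.Ioc (1/(j:ℝ)) (2/(j:ℝ)), fj N γ j s :=
    setIntegral_nonneg measurableSet_Ioc (fun s _ => (fj_pos N γ j s).le)
  have hn4 : 0 ≤ ∫ s in Set.Ioc (2/(j:ℝ)) r, fj N γ j s :=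
    setIntegral_nonneg measurableSet_Ioc (fun s _ => (fj_pos N γ j s).le)
  have hr0 : 0 ≤ r := by positivity
  have hpow1 : (0:ℝ) < (j:ℝ)^((1 + max γ 0)/2 - 1) := Real.rpow_pos_of_pos hjpos _
  have hpow2 : (0:ℝ) < (ell j)^(max γ 0 - 1) := Real.rpow_pos_of_pos (by linarith) _
  have hpow3 : (0:ℝ) ≤ 2*(ell j)^3/Real.sqrt j := by positivity
  obtain ⟨hb5l, hb5r⟩ := abs_le.mp hb5
  rw [Jfun_moser_eq, e1, e2, e3, e4]
  rw [abs_le]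
  constructor
  · nlinarith [Real.exp_pos ((1+|γ|)/ell j)]
  · nlinarith

lemma main_tendsto (N : ℕ) (hN : 2 ≤ N) (γ : ℝ) (hγ : γ < 1) :
    Tendsto (fun j : ℕ => Jfun N γ (moser N j)) atTop (nhds 1) := by
  have hgp : max γ 0 ≤ 1 := max_le hγ.le zero_le_one
  have hgp1 : max γ 0 < 1 := max_lt hγ zero_lt_one
  have hgp0 : (0:ℝ) ≤ max γ 0 := le_max_right _ _
  have hlogcast : Tendsto (fun j : ℕ => Real.log j) atTop atTop :=
    Real.tendsto_log_atTop.comp tendsto_natCast_atTop_atTop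
  have hell_t : Tendsto ell atTop atTop := by
    unfold ell
    exact tendsto_atTop_add_const_left _ 1 hlogcast
  have hsqrt_t : Tendsto (fun j : ℕ => Real.sqrt j) atTop atTop := by
    have h := (tendsto_rpow_atTop (by norm_num : (0:ℝ) < 1/2)).comp
      (tendsto_natCast_atTop_atTop (R := ℝ))
    refine h.congr (fun j => ?_)
    simp only [Function.comp_apply]
    rw [← Real.sqrt_eq_rpow]
  have hT1 : Tendsto (fun j : ℕ => 4*(j:ℝ)^((1 + max γ 0)/2 - 1)) atTop (nhds 0) := by
    have hneg : (1 + max γ 0)/2 - 1 = -((1 - max γ 0)/2) := by ring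
    have h := (tendsto_rpow_neg_atTop (by linarith : (0:ℝ) < (1 - max γ 0)/2)).comp
      (tendsto_natCast_atTop_atTop (R := ℝ))
    have h4 := h.const_mul (4:ℝ)
    rw [mul_zero] at h4
    refine h4.congr (fun j => ?_)
    simp only [Function.comp_apply]
    rw [hneg]
  have hT2 : Tendsto (fun j : ℕ => 27*(ell j)^(max γ 0 - 1)) atTop (nhds 0) := by
    have hneg : max γ 0 - 1 = -(1 - max γ 0) := by ring
    have h := (tendsto_rpow_neg_atTop (by linarith : (0:ℝ) < 1 - max γ 0)).comp hell_t
    have h27 := h.const_mul (27:ℝ)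
    rw [mul_zero] at h27
    refine h27.congr (fun j => ?_)
    simp only [Function.comp_apply]
    rw [hneg]
  have hev_log : ∀ᶠ j : ℕ in atTop, (2:ℝ) ≤ Real.log j := hlogcast.eventually_ge_atTop 2
  have hT3 : Tendsto (fun j : ℕ => 2*(ell j)^3/Real.sqrt j) atTop (nhds 0) := by
    have hbase3 : Tendsto (fun x : ℝ => Real.log x ^ 3 / (1*x + 0)) atTop (nhds 0) :=
      Real.tendsto_pow_log_div_mul_add_atTop 1 0 3 one_ne_zero
    have hcomp3 := hbase3.comp hsqrt_t
    have h54 := hcomp3.const_mul (54:ℝ)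
    rw [mul_zero] at h54
    apply squeeze_zero' ?_ ?_ h54
    · filter_upwards [eventually_ge_atTop 1] with j hj
      have h1 : (1:ℝ) ≤ ell j := ell_ge_one hj
      positivity
    · filter_upwards [hev_log, eventually_ge_atTop 1] with j h1 hj
      have hjpos : (0:ℝ) < j := by exact_mod_cast hj
      have hsq : Real.log (Real.sqrt j) = Real.log j / 2 := Real.log_sqrt hjpos.le
      have hellle : ell j ≤ 3 * Real.log (Real.sqrt j) := by
        unfold ell; rw [hsq]; linarith
      have hlpos : 0 ≤ Real.log (Real.sqrt j) := by rw [hsq]; linarith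
      have hellpos : (0:ℝ) ≤ ell j := by unfold ell; linarith
      have hcube : (ell j)^3 ≤ 27 * Real.log (Real.sqrt j)^3 := by
        calc (ell j)^3 ≤ (3*Real.log (Real.sqrt j))^3 := pow_le_pow_left₀ hellpos hellle 3
        _ = 27 * Real.log (Real.sqrt j)^3 := by ring
      have hs0 : 0 < Real.sqrt j := Real.sqrt_pos.2 hjpos
      show 2*(ell j)^3/Real.sqrt j ≤ 54 * ((fun x : ℝ => Real.log x ^ 3 / (1*x + 0)) (Real.sqrt j))
      simp only [one_mul, add_zero]
      rw [← mul_div_assoc]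
      apply div_le_div_of_nonneg_right ?_ (by positivity)
      linarith
  have hT4 : Tendsto (fun j : ℕ => (ell j)^2/(j:ℝ)) atTop (nhds 0) := by
    have hbase : Tendsto (fun x : ℝ => Real.log x ^ 2 / (1*x + 0)) atTop (nhds 0) :=
      Real.tendsto_pow_log_div_mul_add_atTop 1 0 2 one_ne_zero
    have hcomp := hbase.comp (tendsto_natCast_atTop_atTop (R := ℝ))
    have h4 := hcomp.const_mul (4:ℝ)
    rw [mul_zero] at h4
    apply squeeze_zero' ?_ ?_ h4
    · filter_upwards [eventually_ge_atTop 1] with j hj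
      have h1 : (1:ℝ) ≤ ell j := ell_ge_one hj
      have hjpos : (0:ℝ) < j := by exact_mod_cast hj
      positivity
    · filter_upwards [hev_log, eventually_ge_atTop 1] with j h1 hj
      have hjpos : (0:ℝ) < j := by exact_mod_cast hj
      have hellle : ell j ≤ 2 * Real.log j := by unfold ell; linarith
      have hellpos : (0:ℝ) ≤ ell j := by unfold ell; linarith
      have hsqr : (ell j)^2 ≤ 4 * Real.log j^2 := by
        calc (ell j)^2 ≤ (2*Real.log j)^2 := pow_le_pow_left₀ hellpos hellle 2
        _ = 4 * Real.log j^2 := by ring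
      show (ell j)^2/(j:ℝ) ≤ 4 * ((fun x : ℝ => Real.log x ^ 2 / (1*x + 0)) ((j:ℕ):ℝ))
      simp only [one_mul, add_zero]
      rw [← mul_div_assoc]
      apply div_le_div_of_nonneg_right ?_ (by positivity)
      linarith
  have hdiv : Tendsto (fun j : ℕ => (1+|γ|)/ell j) atTop (nhds 0) :=
    tendsto_const_nhds.div_atTop hell_t
  have hexp := (Real.continuous_exp.tendsto 0).comp hdiv
  rw [Real.exp_zero] at hexp
  have hT5 : Tendsto (fun j : ℕ => Real.exp ((1+|γ|)/ell j) - 1) atTop (nhds 0) := by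
    have h := hexp.sub_const 1
    simpa using h
  have hD : Tendsto (fun j : ℕ => 4*(j:ℝ)^((1 + max γ 0)/2 - 1) + 27*(ell j)^(max γ 0 - 1)
      + 2*(ell j)^3/Real.sqrt j + (ell j)^2/(j:ℝ)
      + (Real.exp ((1+|γ|)/ell j) - 1)) atTop (nhds 0) := by
    have h := (((hT1.add hT2).add hT3).add hT4).add hT5
    simpa using h
  have hev2 : ∀ᶠ j : ℕ in atTop, 2 ≤ (ell j)^2 := by
    filter_upwards [hev_log] with j h1
    have : 2 ≤ ell j := by unfold ell; linarith
    nlinarith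
  have hev3 : ∀ᶠ j : ℕ in atTop, (ell j)^2 ≤ (j:ℝ) := by
    filter_upwards [Filter.Tendsto.eventually_lt_const (by norm_num : (0:ℝ) < 1) hT3,
      eventually_ge_atTop 1, hev_log] with j hlt hj h1
    have hjpos : (0:ℝ) < j := by exact_mod_cast hj
    have hj1 : (1:ℝ) ≤ j := by exact_mod_cast hj
    have hs0 : 0 < Real.sqrt j := Real.sqrt_pos.2 hjpos
    have hell2 : (2:ℝ) ≤ ell j := by unfold ell; linarith
    rw [div_lt_one hs0] at hlt
    have hsj : Real.sqrt j ≤ (j:ℝ) := by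
      have h5 := Real.sqrt_le_sqrt (by nlinarith : (j:ℝ) ≤ (j:ℝ)^2)
      rwa [Real.sqrt_sq hjpos.le] at h5
    nlinarith
  have hevb : ∀ᶠ j : ℕ in atTop, |Jfun N γ (moser N j) - 1| ≤
      4*(j:ℝ)^((1 + max γ 0)/2 - 1) + 27*(ell j)^(max γ 0 - 1)
        + 2*(ell j)^3/Real.sqrt j + (ell j)^2/(j:ℝ)
        + (Real.exp ((1+|γ|)/ell j) - 1) := by
    filter_upwards [eventually_ge_atTop 2, hev2, hev3] with j hj h2 h3
    exact key N hN γ hgp j hj h2 h3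
  rw [← tendsto_sub_nhds_zero_iff, tendsto_zero_iff_abs_tendsto_zero]
  exact squeeze_zero' (Eventually.of_forall (fun j => abs_nonneg _)) hevb hD

end JM

/-- for `γ < 1`, `J_γ (w_j) → 1 = J_γ(0)` along the infinitesimal
Moser sequence. -/
theorem Jfun_moser_tendsto_one (N : ℕ) (hN : 2 ≤ N) (γ : ℝ) (hγ : γ < 1) :
    Filter.Tendsto (fun j : ℕ => Jfun N γ (moser N j)) Filter.atTop (nhds 1) ∧
    Jfun N γ (fun _ => 0) = 1 := by
  exact ⟨JM.main_tendsto N hN γ hγ, JM.Jfun_zero N hN γ⟩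
end
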